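/- arXiv:1110.3939 — 6 statements merged into one kernel-verified Lean document; each statement's English description precedes it below -/
import Mathlib

section
/- Let R be a preference profile over a finite candidate set C. Then: (1) the singleton {i} is a clone set for R for every i ∈ C; (2) the empty set is not a clone set for R, and C itself is a clone set for R; (3) if C_1 and C_2 are clone sets for R and C_1 ∩ C_2 ≠ ∅, then C_1 ∪ C_2 and C_1 ∩ C_2 are clone sets for R; (4) if C_1 and C_2 are clone sets for R and C_1 ⋈ C_2, then C_1 \ C_2 and C_2 \ C_1 are clone sets for R. -/
variable {α : Type*}

/-- `r` is a strict linear order (complete, transitive, antisymmetric) on the set `C`. -/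
def IsLinOn (C : Set α) (r : α → α → Prop) : Prop :=
  (∀ a ∈ C, ¬r a a) ∧
    (∀ a ∈ C, ∀ b ∈ C, ∀ c ∈ C, r a b → r b c → r a c) ∧
      ∀ a ∈ C, ∀ b ∈ C, a ≠ b → r a b ∨ r b a

/-- A preference profile over `C`: a (nonempty) finite tuple of linear orders on `C`. -/
def IsProfile (C : Set α) {n : ℕ} (R : Fin n → α → α → Prop) : Prop :=
  0 < n ∧ ∀ i, IsLinOn C (R i)

/-- `X` is a clone set for the profile `R` over `C`. -/
def IsCloneSet (C : Set α) {n : ℕ} (R : Fin n → α → α → Prop) (X : Set α) : Prop :=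
  X.Nonempty ∧ X ⊆ C ∧
    ∀ c ∈ X, ∀ c' ∈ X, ∀ a ∈ C \ X, ∀ i, (R i c a ↔ R i c' a)

/-- The clone structure of `R`: the family of all clone sets. -/
def cloneSets (C : Set α) {n : ℕ} (R : Fin n → α → α → Prop) : Set (Set α) :=
  {X | IsCloneSet C R X}

/-- `X` and `Y` intersect non-trivially. -/
def Bowtie (X Y : Set α) : Prop :=
  (X ∩ Y).Nonempty ∧ (X \ Y).Nonempty ∧ (Y \ X).Nonempty

lemma lin_flip {C : Set α} {r : α → α → Prop} (h : IsLinOn C r) {a b : α}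
    (ha : a ∈ C) (hb : b ∈ C) (hab : a ≠ b) : r a b ↔ ¬ r b a := by
  constructor
  · intro h1 h2
    exact h.1 a ha (h.2.1 a ha b hb a ha h1 h2)
  · intro h2
    rcases h.2.2 a ha b hb hab with h1 | h1
    · exact h1
    · exact absurd h1 h2

lemma diff_clone {C : Set α} {n : ℕ} {R : Fin n → α → α → Prop} (hR : IsProfile C R)
    {C₁ C₂ : Set α} (h₁ : IsCloneSet C R C₁) (h₂ : IsCloneSet C R C₂)
    (hu : (C₁ \ C₂).Nonempty) (hy : (C₂ \ C₁).Nonempty) : IsCloneSet C R (C₁ \ C₂) := by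
  obtain ⟨y, hy⟩ := hy
  refine ⟨hu, fun x hx => h₁.2.1 hx.1, ?_⟩
  intro c hc c' hc' a ha i
  by_cases haC₁ : a ∈ C₁
  · have haC₂ : a ∈ C₂ := by
      by_contra h
      exact ha.2 ⟨haC₁, h⟩
    have hyC : y ∈ C := h₂.2.1 hy.1
    have step : ∀ c'' ∈ C₁ \ C₂, (R i c'' a ↔ R i c'' y) := by
      intro c'' hc''
      have hcC : c'' ∈ C := h₁.2.1 hc''.1
      have h1 : c'' ≠ a := fun h => hc''.2 (h ▸ haC₂)
      have h2 : c'' ≠ y := fun h => hc''.2 (h ▸ hy.1)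
      rw [lin_flip (hR.2 i) hcC ha.1 h1, lin_flip (hR.2 i) hcC hyC h2]
      exact not_congr (h₂.2.2 a haC₂ y hy.1 c'' ⟨hcC, hc''.2⟩ i)
    have step2 : R i c y ↔ R i c' y := h₁.2.2 c hc.1 c' hc'.1 y ⟨hyC, hy.2⟩ i
    exact ((step c hc).trans step2).trans (step c' hc').symm
  · exact h₁.2.2 c hc.1 c' hc'.1 a ⟨ha.1, haC₁⟩ i

theorem cloneSets_basic_properties (C : Set α) (hfin : C.Finite) (hne : C.Nonempty)
    {n : ℕ} (R : Fin n → α → α → Prop) (hR : IsProfile C R) :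
    (∀ i ∈ C, ({i} : Set α) ∈ cloneSets C R) ∧
      ((∅ : Set α) ∉ cloneSets C R ∧ C ∈ cloneSets C R) ∧
      (∀ C₁ ∈ cloneSets C R, ∀ C₂ ∈ cloneSets C R, (C₁ ∩ C₂).Nonempty →
        C₁ ∪ C₂ ∈ cloneSets C R ∧ C₁ ∩ C₂ ∈ cloneSets C R) ∧
      ∀ C₁ ∈ cloneSets C R, ∀ C₂ ∈ cloneSets C R, Bowtie C₁ C₂ →
        C₁ \ C₂ ∈ cloneSets C R ∧ C₂ \ C₁ ∈ cloneSets C R := by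
  refine ⟨?_, ⟨?_, ?_⟩, ?_, ?_⟩
  · intro i hi
    refine ⟨⟨i, rfl⟩, by simpa using hi, ?_⟩
    rintro c rfl c' rfl a _ j
    rfl
  · rintro ⟨⟨x, hx⟩, -, -⟩
    exact hx
  · exact ⟨hne, le_refl _, fun c _ c' _ a ha i => absurd ha.1 ha.2⟩
  · intro C₁ h₁ C₂ h₂ ⟨x, hx⟩
    constructor
    · refine ⟨⟨x, Or.inl hx.1⟩, Set.union_subset h₁.2.1 h₂.2.1, ?_⟩
      intro c hc c' hc' a ha i
      have key : ∀ c'' ∈ C₁ ∪ C₂, (R i c'' a ↔ R i x a) := by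
        rintro c'' (h | h)
        · exact h₁.2.2 c'' h x hx.1 a ⟨ha.1, fun hh => ha.2 (Or.inl hh)⟩ i
        · exact h₂.2.2 c'' h x hx.2 a ⟨ha.1, fun hh => ha.2 (Or.inr hh)⟩ i
      exact (key c hc).trans (key c' hc').symm
    · refine ⟨⟨x, hx⟩, fun z hz => h₁.2.1 hz.1, ?_⟩
      intro c hc c' hc' a ha i
      by_cases haC₁ : a ∈ C₁
      · have haC₂ : a ∉ C₂ := fun h => ha.2 ⟨haC₁, h⟩
        exact h₂.2.2 c hc.2 c' hc'.2 a ⟨ha.1, haC₂⟩ i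
      · exact h₁.2.2 c hc.1 c' hc'.1 a ⟨ha.1, haC₁⟩ i
  · intro C₁ h₁ C₂ h₂ hb
    exact ⟨diff_clone hR h₁ h₂ hb.2.1 hb.2.2, diff_clone hR h₂ h₁ hb.2.2 hb.2.1⟩
end

section
/- For any preference profile R over a finite candidate set C, each clone set X for R has at most two proper minimal supersets in the clone structure 𝒞(R). -/
variable {α : Type*}

/-- `Z` is a proper minimal superset of `X` in the family `𝓕`. -/
def IsProperMinimalSuperset (𝓕 : Set (Set α)) (X Z : Set α) : Prop :=
  Z ∈ 𝓕 ∧ X ⊆ Z ∧ X ≠ Z ∧ ∀ Y ∈ 𝓕, X ⊆ Y → Y ⊆ Z → Y = X ∨ Y = Z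

lemma clone_inter {C : Set α} {n : ℕ} {R : Fin n → α → α → Prop}
    {X Y : Set α} (hX : IsCloneSet C R X) (hY : IsCloneSet C R Y)
    (h : (X ∩ Y).Nonempty) : IsCloneSet C R (X ∩ Y) := by
  refine ⟨h, fun a ha => hX.2.1 ha.1, ?_⟩
  rintro c ⟨hcX, hcY⟩ c' ⟨hcX', hcY'⟩ a ⟨haC, haXY⟩ i
  by_cases haX : a ∈ X
  · have haY : a ∉ Y := fun hy => haXY ⟨haX, hy⟩
    exact hY.2.2 c hcY c' hcY' a ⟨haC, haY⟩ i
  · exact hX.2.2 c hcX c' hcX' a ⟨haC, haX⟩ i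

lemma clone_interval {C : Set α} {n : ℕ} {R : Fin n → α → α → Prop}
    (hR : IsProfile C R) {Z : Set α} (hZ : IsCloneSet C R Z)
    (i : Fin n) {a b c : α} (ha : a ∈ Z) (hb : b ∈ Z) (hc : c ∈ C)
    (h1 : R i a c) (h2 : R i c b) : c ∈ Z := by
  by_contra hcZ
  have hiff := hZ.2.2 a ha b hb c ⟨hc, hcZ⟩ i
  have hbc : R i b c := hiff.mp h1
  have hlin := hR.2 i
  have hbC := hZ.2.1 hb
  exact hlin.1 b hbC (hlin.2.1 b hbC c hc b hbC hbc h2)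

lemma clone_side {C : Set α} {n : ℕ} {R : Fin n → α → α → Prop}
    (hR : IsProfile C R) {X : Set α} (hX : IsCloneSet C R X)
    (i : Fin n) {z : α} (hzC : z ∈ C) (hzX : z ∉ X) :
    (∀ x ∈ X, R i z x) ∨ (∀ x ∈ X, R i x z) := by
  obtain ⟨x0, hx0⟩ := hX.1
  have hlin := hR.2 i
  have hx0C := hX.2.1 hx0
  have hne : z ≠ x0 := fun h => hzX (h ▸ hx0)
  rcases hlin.2.2 z hzC x0 hx0C hne with h | h
  · left; intro x hx
    have hxC := hX.2.1 hx
    have hne' : z ≠ x := fun h' => hzX (h' ▸ hx)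
    rcases hlin.2.2 z hzC x hxC hne' with h' | h'
    · exact h'
    · exact absurd (clone_interval hR hX i hx hx0 hzC h' h) hzX
  · right; intro x hx
    have hxC := hX.2.1 hx
    have hne' : x ≠ z := fun h' => hzX (h' ▸ hx)
    rcases hlin.2.2 x hxC z hzC hne' with h' | h'
    · exact h'
    · exact absurd (clone_interval hR hX i hx0 hx hzC h h') hzX

theorem cloneSet_at_most_two_proper_minimal_supersets (C : Set α) (hfin : C.Finite)
    {n : ℕ} (R : Fin n → α → α → Prop) (hR : IsProfile C R)
    (X : Set α) (hX : X ∈ cloneSets C R) :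
    {Z | IsProperMinimalSuperset (cloneSets C R) X Z}.encard ≤ 2 := by
  set S := {Z | IsProperMinimalSuperset (cloneSets C R) X Z} with hS
  by_contra hcon
  push_neg at hcon
  -- extract three pairwise distinct elements of S
  obtain ⟨Z1, hZ1⟩ : S.Nonempty := by
    rw [← Set.one_le_encard_iff_nonempty]
    exact le_trans (by norm_num) hcon.le
  have h2 : 1 < (S \ {Z1}).encard := by
    have := Set.encard_diff_singleton_add_one hZ1
    by_contra h; push_neg at h
    have : S.encard ≤ 1 + 1 := by
      rw [← this]
      exact add_le_add h le_rfl
    exact absurd hcon (not_lt.mpr (this.trans_eq one_add_one_eq_two))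
  rw [Set.one_lt_encard_iff] at h2
  obtain ⟨Z2, Z3, hZ2, hZ3, h23⟩ := h2
  have h12 : Z1 ≠ Z2 := fun h => hZ2.2 (by simp [h.symm])
  have h13 : Z1 ≠ Z3 := fun h => hZ3.2 (by simp [h.symm])
  have hZ2 := hZ2.1
  have hZ3 := hZ3.1
  -- pairwise intersections equal X
  have hx0 := (hX : IsCloneSet C R X).1
  obtain ⟨x0, hx0⟩ := hx0
  have key : ∀ Z W, Z ∈ S → W ∈ S → Z ≠ W → Z ∩ W ⊆ X := by
    intro Z W hZ hW hne
    have hXZW : X ⊆ Z ∩ W := Set.subset_inter hZ.2.1 hW.2.1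
    have hclone : IsCloneSet C R (Z ∩ W) :=
      clone_inter hZ.1 hW.1 ⟨x0, hXZW hx0⟩
    rcases hZ.2.2.2 (Z ∩ W) hclone hXZW Set.inter_subset_left with h | h
    · exact h.le
    · -- Z ∩ W = Z, so Z ⊆ W
      have hZW : Z ⊆ W := by
        intro a ha
        have : a ∈ Z ∩ W := h.symm ▸ ha
        exact this.2
      rcases hW.2.2.2 Z hZ.1 hZ.2.1 hZW with h' | h'
      · exact absurd h'.symm hZ.2.2.1
      · exact absurd h' hne
  -- pick witnesses
  have pick : ∀ Z, Z ∈ S → ∃ z, z ∈ Z ∧ z ∉ X := by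
    intro Z hZ
    obtain ⟨z, hz1, hz2⟩ := Set.exists_of_ssubset (hZ.2.1.ssubset_of_ne hZ.2.2.1)
    exact ⟨z, hz1, hz2⟩
  obtain ⟨z1, hz1Z, hz1X⟩ := pick Z1 hZ1
  obtain ⟨z2, hz2Z, hz2X⟩ := pick Z2 hZ2
  obtain ⟨z3, hz3Z, hz3X⟩ := pick Z3 hZ3
  set i0 : Fin n := ⟨0, hR.1⟩
  have hlin := hR.2 i0
  -- same side contradiction helpers
  have above : ∀ Z W z w, Z ∈ S → W ∈ S → Z ≠ W → z ∈ Z → z ∉ X → w ∈ W → w ∉ X →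
      R i0 z x0 → R i0 w x0 → False := by
    intro Z W z w hZ hW hne hzZ hzX hwW hwX hz hw
    have hzC : z ∈ C := hZ.1.2.1 hzZ
    have hwC : w ∈ C := hW.1.2.1 hwW
    have hzw : z ≠ w := by
      rintro rfl
      exact hzX (key Z W hZ hW hne ⟨hzZ, hwW⟩)
    rcases hlin.2.2 z hzC w hwC hzw with h | h
    · exact hwX (key Z W hZ hW hne
        ⟨clone_interval hR hZ.1 i0 hzZ (hZ.2.1 hx0) hwC h hw, hwW⟩)
    · exact hzX (key Z W hZ hW hne
        ⟨hzZ, clone_interval hR hW.1 i0 hwW (hW.2.1 hx0) hzC h hz⟩)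
  have below : ∀ Z W z w, Z ∈ S → W ∈ S → Z ≠ W → z ∈ Z → z ∉ X → w ∈ W → w ∉ X →
      R i0 x0 z → R i0 x0 w → False := by
    intro Z W z w hZ hW hne hzZ hzX hwW hwX hz hw
    have hzC : z ∈ C := hZ.1.2.1 hzZ
    have hwC : w ∈ C := hW.1.2.1 hwW
    have hzw : z ≠ w := by
      rintro rfl
      exact hzX (key Z W hZ hW hne ⟨hzZ, hwW⟩)
    rcases hlin.2.2 z hzC w hwC hzw with h | h
    · exact hzX (key Z W hZ hW hne
        ⟨hzZ, clone_interval hR hW.1 i0 (hW.2.1 hx0) hwW hzC hz h⟩)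
    · exact hwX (key Z W hZ hW hne
        ⟨clone_interval hR hZ.1 i0 (hZ.2.1 hx0) hzZ hwC hw h, hwW⟩)
  have hside1 := clone_side hR hX i0 (hZ1.1.2.1 hz1Z) hz1X
  have hside2 := clone_side hR hX i0 (hZ2.1.2.1 hz2Z) hz2X
  have hside3 := clone_side hR hX i0 (hZ3.1.2.1 hz3Z) hz3X
  rcases hside1 with h1 | h1 <;> rcases hside2 with h2 | h2 <;> rcases hside3 with h3 | h3
  · exact above Z1 Z2 z1 z2 hZ1 hZ2 h12 hz1Z hz1X hz2Z hz2X (h1 x0 hx0) (h2 x0 hx0)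
  · exact above Z1 Z2 z1 z2 hZ1 hZ2 h12 hz1Z hz1X hz2Z hz2X (h1 x0 hx0) (h2 x0 hx0)
  · exact above Z1 Z3 z1 z3 hZ1 hZ3 h13 hz1Z hz1X hz3Z hz3X (h1 x0 hx0) (h3 x0 hx0)
  · exact below Z2 Z3 z2 z3 hZ2 hZ3 h23 hz2Z hz2X hz3Z hz3X (h2 x0 hx0) (h3 x0 hx0)
  · exact above Z2 Z3 z2 z3 hZ2 hZ3 h23 hz2Z hz2X hz3Z hz3X (h2 x0 hx0) (h3 x0 hx0)
  · exact below Z1 Z3 z1 z3 hZ1 hZ3 h13 hz1Z hz1X hz3Z hz3X (h1 x0 hx0) (h3 x0 hx0)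
  · exact below Z1 Z2 z1 z2 hZ1 hZ2 h12 hz1Z hz1X hz2Z hz2X (h1 x0 hx0) (h2 x0 hx0)
  · exact below Z1 Z2 z1 z2 hZ1 hZ2 h12 hz1Z hz1X hz2Z hz2X (h1 x0 hx0) (h2 x0 hx0)
end

section
/- If 𝒞 is a clone structure, i.e., 𝒞 = 𝒞(R) for some preference profile R over a finite candidate set C, then 𝒞 does not contain a bicycle chain: no finite collection of sets A_0, …, A_{k-1} ∈ 𝒞 forms a bicycle chain. -/
variable {α : Type*}

/-- The family `𝓕` contains a bicycle chain. -/
def HasBicycleChain (𝓕 : Set (Set α)) : Prop :=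
  ∃ (k : ℕ) (A : ZMod k → Set α), 3 ≤ k ∧ (∀ i, A i ∈ 𝓕) ∧
    ∀ i : ZMod k,
      Bowtie (A (i - 1)) (A i) ∧ A (i - 1) ∩ A i ∩ A (i + 1) = ∅ ∧
        A i ⊆ A (i - 1) ∪ A (i + 1)


/-- core contradiction for the dichotomy lemma -/
lemma clone_core {C : Set α} {r : α → α → Prop}
    (hIrr : ∀ a ∈ C, ¬r a a)
    (hTr : ∀ a ∈ C, ∀ b ∈ C, ∀ c ∈ C, r a b → r b c → r a c)
    (hTot : ∀ a ∈ C, ∀ b ∈ C, a ≠ b → r a b ∨ r b a)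
    {X Y : Set α} (hXC : X ⊆ C) (hYC : Y ⊆ C)
    (hXI : ∀ x ∈ X, ∀ z ∈ X, ∀ y ∈ C, r x y → r y z → y ∈ X)
    (hYI : ∀ x ∈ Y, ∀ z ∈ Y, ∀ y ∈ C, r x y → r y z → y ∈ Y)
    {w x y x' y' : α} (hwX : w ∈ X) (hwY : w ∈ Y)
    (hx : x ∈ X \ Y) (hy : y ∈ Y \ X) (hx' : x' ∈ X \ Y) (hy' : y' ∈ Y \ X)
    (h1 : r x y) (h2 : r y' x') : False := by
  have xC := hXC hx.1; have yC := hYC hy.1; have x'C := hXC hx'.1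
  have y'C := hYC hy'.1; have wC := hXC hwX
  -- s3 : r y' w
  have hy'w : r y' w := by
    rcases hTot y' y'C w wC (fun h => hy'.2 (h ▸ hwX)) with h | h
    · exact h
    · exact absurd (hXI w hwX x' hx'.1 y' y'C h h2) hy'.2
  rcases hTot x xC w wC (fun h => hx.2 (h ▸ hwY)) with hxw | hwx
  · rcases hTot x xC y' y'C (fun h => hx.2 (h ▸ hy'.1)) with h | h
    · exact hy'.2 (hXI x hx.1 w hwX y' y'C h hy'w)
    · exact hx.2 (hYI y' hy'.1 y hy.1 x xC h h1)
  · have : r y' x := hTr y' y'C w wC x xC hy'w hwx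
    exact hx.2 (hYI y' hy'.1 y hy.1 x xC this h1)

/-- dichotomy: two properly-overlapping intervals are ordered one way or the other -/
lemma clone_dichotomy {C : Set α} {r : α → α → Prop}
    (hIrr : ∀ a ∈ C, ¬r a a)
    (hTr : ∀ a ∈ C, ∀ b ∈ C, ∀ c ∈ C, r a b → r b c → r a c)
    (hTot : ∀ a ∈ C, ∀ b ∈ C, a ≠ b → r a b ∨ r b a)
    {X Y : Set α} (hXC : X ⊆ C) (hYC : Y ⊆ C)
    (hXI : ∀ x ∈ X, ∀ z ∈ X, ∀ y ∈ C, r x y → r y z → y ∈ X)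
    (hYI : ∀ x ∈ Y, ∀ z ∈ Y, ∀ y ∈ C, r x y → r y z → y ∈ Y)
    (hw : (X ∩ Y).Nonempty) :
    (∀ x ∈ X \ Y, ∀ y ∈ Y \ X, r x y) ∨ (∀ x ∈ X \ Y, ∀ y ∈ Y \ X, r y x) := by
  obtain ⟨w, hwX, hwY⟩ := hw
  by_contra h
  push_neg at h
  obtain ⟨⟨x, hx, y, hy, hxy⟩, ⟨x', hx', y', hy', hyx'⟩⟩ := h
  have h1 : r y x := by
    rcases hTot x (hXC hx.1) y (hYC hy.1) (fun h => hx.2 (h ▸ hy.1)) with h | h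
    · exact absurd h hxy
    · exact h
  have h2 : r x' y' := by
    rcases hTot x' (hXC hx'.1) y' (hYC hy'.1) (fun h => hx'.2 (h ▸ hy'.1)) with h | h
    · exact h
    · exact absurd h hyx'
  exact clone_core hIrr hTr hTot hYC hXC hYI hXI hwY hwX hy hx hy' hx' h1 h2

/-- propagation contradiction -/
lemma clone_prop {C : Set α} {r : α → α → Prop}
    (hTr : ∀ a ∈ C, ∀ b ∈ C, ∀ c ∈ C, r a b → r b c → r a c)
    (hTot : ∀ a ∈ C, ∀ b ∈ C, a ≠ b → r a b ∨ r b a)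
    {X Y Z : Set α} (hXC : X ⊆ C) (hYC : Y ⊆ C) (hZC : Z ⊆ C)
    (hXI : ∀ x ∈ X, ∀ z ∈ X, ∀ y ∈ C, r x y → r y z → y ∈ X)
    (hZI : ∀ x ∈ Z, ∀ z ∈ Z, ∀ y ∈ C, r x y → r y z → y ∈ Z)
    (hXY : (X ∩ Y).Nonempty) (hYZ : (Y ∩ Z).Nonempty)
    (hXmY : (X \ Y).Nonempty) (hZmY : (Z \ Y).Nonempty)
    (htri : X ∩ Y ∩ Z = ∅)
    (hLXY : ∀ x ∈ X \ Y, ∀ y ∈ Y \ X, r x y)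
    (hLZY : ∀ z ∈ Z \ Y, ∀ y ∈ Y \ Z, r z y) : False := by
  obtain ⟨x, hxX, hxY⟩ := hXY
  obtain ⟨z, hzY, hzZ⟩ := hYZ
  have hxZ : x ∉ Z := fun h => (Set.eq_empty_iff_forall_notMem.1 htri x) ⟨⟨hxX, hxY⟩, h⟩
  have hzX : z ∉ X := fun h => (Set.eq_empty_iff_forall_notMem.1 htri z) ⟨⟨h, hzY⟩, hzZ⟩
  obtain ⟨p, hp⟩ := hXmY
  obtain ⟨q, hq⟩ := hZmY
  have hpz : r p z := hLXY p hp z ⟨hzY, hzX⟩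
  have hqx : r q x := hLZY q hq x ⟨hxY, hxZ⟩
  rcases hTot x (hYC hxY) z (hYC hzY) (fun h => hxZ (h ▸ hzZ)) with h | h
  · exact hxZ (hZI q hq.1 z hzZ x (hYC hxY) hqx h)
  · exact hzX (hXI p hp.1 x hxX z (hYC hzY) hpz h)

/-- final cycle contradiction -/
lemma clone_cycle {C : Set α} {r : α → α → Prop}
    (hIrr : ∀ a ∈ C, ¬r a a)
    (hTr : ∀ a ∈ C, ∀ b ∈ C, ∀ c ∈ C, r a b → r b c → r a c)
    {k : ℕ} (hk : 3 ≤ k) (x : ZMod k → α) (hxC : ∀ i, x i ∈ C)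
    (hstep : ∀ j : ZMod k, r (x j) (x (j + 2))) : False := by
  haveI : NeZero k := ⟨by omega⟩
  have hiter : ∀ t : ℕ, r (x 0) (x ((2 * t + 2 : ℕ) : ZMod k)) := by
    intro t
    induction t with
    | zero => simpa using hstep 0
    | succ t ih =>
      have h := hstep ((2 * t + 2 : ℕ) : ZMod k)
      have e : ((2 * (t + 1) + 2 : ℕ) : ZMod k) = ((2 * t + 2 : ℕ) : ZMod k) + 2 := by
        push_cast; ring
      rw [e]
      exact hTr _ (hxC _) _ (hxC _) _ (hxC _) ih h
  have h0 : ((2 * (k - 1) + 2 : ℕ) : ZMod k) = 0 := by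
    have e : 2 * (k - 1) + 2 = 2 * k := by omega
    rw [e]; push_cast [ZMod.natCast_self]; ring
  have := hiter (k - 1)
  rw [h0] at this
  exact hIrr (x 0) (hxC 0) this

/-- main auxiliary: a directed bicycle chain of intervals is impossible -/
lemma clone_main_aux {C : Set α} (r : α → α → Prop)
    (hIrr : ∀ a ∈ C, ¬r a a)
    (hTr : ∀ a ∈ C, ∀ b ∈ C, ∀ c ∈ C, r a b → r b c → r a c)
    (hTot : ∀ a ∈ C, ∀ b ∈ C, a ≠ b → r a b ∨ r b a)
    {k : ℕ} (hk : 3 ≤ k) (A : ZMod k → Set α)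
    (hsub : ∀ i, A i ⊆ C)
    (hitv : ∀ i, ∀ x ∈ A i, ∀ z ∈ A i, ∀ y ∈ C, r x y → r y z → y ∈ A i)
    (hbow : ∀ i : ZMod k, Bowtie (A i) (A (i + 1)))
    (htri : ∀ i : ZMod k, A i ∩ A (i + 1) ∩ A (i + 2) = ∅)
    (hL0 : ∀ x ∈ A 0 \ A (0 + 1), ∀ y ∈ A (0 + 1) \ A 0, r x y) : False := by
  haveI : NeZero k := ⟨by omega⟩
  -- one propagation step
  have step : ∀ i : ZMod k,
      (∀ x ∈ A i \ A (i + 1), ∀ y ∈ A (i + 1) \ A i, r x y) →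
      (∀ x ∈ A (i + 1) \ A (i + 1 + 1), ∀ y ∈ A (i + 1 + 1) \ A (i + 1), r x y) := by
    intro i hL
    have e : i + 1 + 1 = i + 2 := by ring
    rcases clone_dichotomy hIrr hTr hTot (hsub (i + 1)) (hsub (i + 1 + 1))
        (hitv (i + 1)) (hitv (i + 1 + 1)) (hbow (i + 1)).1 with h | h
    · exact h
    · rw [e] at h
      exact absurd (clone_prop hTr hTot (hsub i) (hsub (i + 1)) (hsub (i + 2))
        (hitv i) (hitv (i + 2)) (hbow i).1 (e ▸ (hbow (i + 1)).1)
        (hbow i).2.1 (by simpa [e] using (hbow (i + 1)).2.2) (htri i) hL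
        (fun z hz y hy => h y hy z hz)) (fun x => x)
  -- propagate to all indices
  have key : ∀ t : ℕ, ∀ x ∈ A (t : ZMod k) \ A ((t : ZMod k) + 1),
      ∀ y ∈ A ((t : ZMod k) + 1) \ A (t : ZMod k), r x y := by
    intro t
    induction t with
    | zero => simpa using hL0
    | succ t ih =>
      have h := step (t : ZMod k) ih
      have e : ((t + 1 : ℕ) : ZMod k) = (t : ZMod k) + 1 := by push_cast; ring
      rw [e]; exact h
  have D : ∀ i : ZMod k, ∀ x ∈ A i \ A (i + 1), ∀ y ∈ A (i + 1) \ A i, r x y := by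
    intro i
    have : ((i.val : ℕ) : ZMod k) = i := by simp [ZMod.natCast_val, ZMod.cast_id]
    simpa [this] using key i.val
  -- choose witnesses in consecutive intersections
  have hex : ∀ i : ZMod k, ∃ a, a ∈ A i ∩ A (i + 1) := fun i => (hbow i).1
  choose x hx using hex
  have hxC : ∀ i, x i ∈ C := fun i => hsub i (hx i).1
  have hstep : ∀ j : ZMod k, r (x j) (x (j + 2)) := by
    intro j
    have h1 : x j ∈ A (j + 1) \ A (j + 1 + 1) := by
      refine ⟨(hx j).2, fun h => ?_⟩
      have e : j + 1 + 1 = j + 2 := by ring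
      exact (Set.eq_empty_iff_forall_notMem.1 (htri j) (x j)) ⟨⟨(hx j).1, (hx j).2⟩, e ▸ h⟩
    have h2 : x (j + 2) ∈ A (j + 1 + 1) \ A (j + 1) := by
      have e : j + 1 + 1 = j + 2 := by ring
      refine ⟨e ▸ (hx (j + 2)).1, fun h => ?_⟩
      have e2 : j + 2 + 1 = (j + 1) + 2 := by ring
      exact (Set.eq_empty_iff_forall_notMem.1 (htri (j + 1)) (x (j + 2)))
        ⟨⟨h, e ▸ (hx (j + 2)).1⟩, e2 ▸ (hx (j + 2)).2⟩
    exact D (j + 1) (x j) h1 (x (j + 2)) h2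
  exact clone_cycle hIrr hTr hk x hxC hstep

theorem cloneSets_no_bicycle_chain (C : Set α) (hfin : C.Finite)
    {n : ℕ} (R : Fin n → α → α → Prop) (hR : IsProfile C R) :
    ¬HasBicycleChain (cloneSets C R) := by
  rintro ⟨k, A, hk, hmem, hcond⟩
  haveI : NeZero k := ⟨by omega⟩
  obtain ⟨hn, hlin⟩ := hR
  set i0 : Fin n := ⟨0, hn⟩
  set r := R i0 with hrdef
  obtain ⟨hIrr, hTr, hTot⟩ := hlin i0
  have hsub : ∀ i, A i ⊆ C := fun i => (hmem i).2.1
  -- each clone set is an interval of r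
  have hitv : ∀ i, ∀ x ∈ A i, ∀ z ∈ A i, ∀ y ∈ C, r x y → r y z → y ∈ A i := by
    intro i x hx z hz y hyC hxy hyz
    by_contra hyA
    have h := (hmem i).2.2 x hx z hz y ⟨hyC, hyA⟩ i0
    have hzy : r z y := h.1 hxy
    exact hIrr y hyC (hTr y hyC z (hsub i hz) y hyC hyz hzy)
  have hbow : ∀ i : ZMod k, Bowtie (A i) (A (i + 1)) := by
    intro i
    have h := (hcond (i + 1)).1
    simpa using h
  have htri : ∀ i : ZMod k, A i ∩ A (i + 1) ∩ A (i + 2) = ∅ := by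
    intro i
    have h := (hcond (i + 1)).2.1
    have e : i + 1 + 1 = i + 2 := by ring
    rwa [add_sub_cancel_right, e] at h
  rcases clone_dichotomy hIrr hTr hTot (hsub 0) (hsub (0 + 1)) (hitv 0) (hitv (0 + 1))
      (hbow 0).1 with h | h
  · exact clone_main_aux r hIrr hTr hTot hk A hsub hitv hbow htri h
  · -- reversed order
    refine clone_main_aux (fun a b => r b a) hIrr
      (fun a ha b hb c hc h1 h2 => hTr c hc b hb a ha h2 h1)
      (fun a ha b hb hne => (hTot a ha b hb hne).symm) hk A hsub
      (fun i x hx z hz y hy h1 h2 => hitv i z hz x hx y hy h2 h1) hbow htri h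
end

section
/- Let ℰ and ℱ be families of subsets of disjoint finite sets E and F, respectively, each satisfying axioms A1–A5 (over E and F, respectively). Then for any e ∈ E, the embedded family ℰ(e → ℱ), regarded as a family of subsets of (E \ {e}) ∪ F, also satisfies axioms A1–A5. -/
variable {α : Type*}


/-- A family `𝓕` of subsets of `F` satisfies axioms A1–A5. -/
def SatisfiesAxioms (F : Set α) (𝓕 : Set (Set α)) : Prop :=
  (∀ X ∈ 𝓕, X ⊆ F) ∧
    ((∀ f ∈ F, ({f} : Set α) ∈ 𝓕) ∧ (∅ : Set α) ∉ 𝓕 ∧ F ∈ 𝓕) ∧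
    (∀ C₁ ∈ 𝓕, ∀ C₂ ∈ 𝓕, (C₁ ∩ C₂).Nonempty → C₁ ∪ C₂ ∈ 𝓕 ∧ C₁ ∩ C₂ ∈ 𝓕) ∧
    (∀ C₁ ∈ 𝓕, ∀ C₂ ∈ 𝓕, Bowtie C₁ C₂ → C₁ \ C₂ ∈ 𝓕 ∧ C₂ \ C₁ ∈ 𝓕) ∧
    (∀ X ∈ 𝓕, {Z | IsProperMinimalSuperset 𝓕 X Z}.encard ≤ 2) ∧
    ¬HasBicycleChain 𝓕

/-- The embedding `𝓔(e → 𝓓)` of a family `𝓓` over `D` into `𝓔` at element `e`: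
each set of `𝓔` containing `e` has `e` replaced by `D`; the sets of `𝓓` are added. -/
def embedFamily (𝓔 : Set (Set α)) (e : α) (D : Set α) (𝓓 : Set (Set α)) :
    Set (Set α) :=
  𝓓 ∪ {Y | ∃ X ∈ 𝓔, (e ∈ X ∧ Y = (X \ {e}) ∪ D) ∨ (e ∉ X ∧ Y = X)}




open Classical in
/-- Replace `e` by `D` in `X` (if `e ∈ X`). -/
noncomputable def emb (e : α) (D X : Set α) : Set α :=
  if e ∈ X then (X \ {e}) ∪ D else X

section emb

variable {e : α} {D X X' : Set α}

lemma emb_of_mem (h : e ∈ X) : emb e D X = (X \ {e}) ∪ D := by simp [emb, h]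

lemma emb_of_notMem (h : e ∉ X) : emb e D X = X := by simp [emb, h]

lemma mem_emb_iff {a : α} :
    a ∈ emb e D X ↔ (a ∈ X ∧ a ≠ e) ∨ (e ∈ X ∧ a ∈ D) := by
  by_cases h : e ∈ X
  · simp [emb_of_mem h, h, Set.mem_union, Set.mem_diff, Set.mem_singleton_iff]
  · rw [emb_of_notMem h]
    constructor
    · intro ha
      exact Or.inl ⟨ha, fun h' => h (h' ▸ ha)⟩
    · rintro (⟨ha, -⟩ | ⟨he, -⟩)
      · exact ha
      · exact absurd he h

lemma emb_union : emb e D (X ∪ X') = emb e D X ∪ emb e D X' := by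
  ext a
  simp only [mem_emb_iff, Set.mem_union]
  tauto

lemma emb_inter (h1 : ∀ a ∈ D, a ∉ X) (h2 : ∀ a ∈ D, a ∉ X') :
    emb e D (X ∩ X') = emb e D X ∩ emb e D X' := by
  ext a
  simp only [mem_emb_iff, Set.mem_inter_iff]
  have g1 : a ∈ D → a ∉ X := fun h => h1 a h
  have g2 : a ∈ D → a ∉ X' := fun h => h2 a h
  tauto

lemma emb_diff (h1 : ∀ a ∈ D, a ∉ X) (h2 : ∀ a ∈ D, a ∉ X') :
    emb e D (X \ X') = emb e D X \ emb e D X' := by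
  ext a
  simp only [mem_emb_iff, Set.mem_diff]
  have g1 : a ∈ D → a ∉ X := fun h => h1 a h
  have g2 : a ∈ D → a ∉ X' := fun h => h2 a h
  tauto

lemma emb_nonempty (hD : D.Nonempty) : (emb e D X).Nonempty ↔ X.Nonempty := by
  constructor
  · rintro ⟨a, ha⟩
    rcases mem_emb_iff.mp ha with ⟨h, -⟩ | ⟨h, -⟩
    · exact ⟨a, h⟩
    · exact ⟨e, h⟩
  · rintro ⟨a, ha⟩
    by_cases h : e ∈ X
    · obtain ⟨d, hd⟩ := hD
      exact ⟨d, mem_emb_iff.mpr (Or.inr ⟨h, hd⟩)⟩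
    · exact ⟨a, mem_emb_iff.mpr (Or.inl ⟨ha, fun h' => h (h' ▸ ha)⟩)⟩

lemma emb_eq_empty (hD : D.Nonempty) : emb e D X = ∅ ↔ X = ∅ := by
  rw [← Set.not_nonempty_iff_eq_empty, ← Set.not_nonempty_iff_eq_empty]
  exact not_congr (emb_nonempty hD)

lemma emb_subset_iff (hD : D.Nonempty) (h1 : ∀ a ∈ D, a ∉ X) (h2 : ∀ a ∈ D, a ∉ X') :
    emb e D X ⊆ emb e D X' ↔ X ⊆ X' := by
  rw [← Set.diff_eq_empty, ← Set.diff_eq_empty (s := X), ← emb_diff h1 h2,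
    emb_eq_empty hD]

lemma emb_inj (hD : D.Nonempty) (h1 : ∀ a ∈ D, a ∉ X) (h2 : ∀ a ∈ D, a ∉ X')
    (h : emb e D X = emb e D X') : X = X' :=
  Set.Subset.antisymm ((emb_subset_iff hD h1 h2).mp h.subset)
    ((emb_subset_iff hD h2 h1).mp h.symm.subset)

end emb

lemma mem_embedFamily_iff {𝓔 𝓓 : Set (Set α)} {e : α} {D Y : Set α} :
    Y ∈ (𝓓 ∪ {Y | ∃ X ∈ 𝓔, (e ∈ X ∧ Y = (X \ {e}) ∪ D) ∨ (e ∉ X ∧ Y = X)} : Set (Set α)) ↔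
      Y ∈ 𝓓 ∨ ∃ X ∈ 𝓔, Y = emb e D X := by
  rw [Set.mem_union]
  apply or_congr_right
  simp only [Set.mem_setOf_eq]
  constructor
  · rintro ⟨X, hX, ⟨heX, rfl⟩ | ⟨heX, rfl⟩⟩
    · exact ⟨X, hX, (emb_of_mem heX).symm⟩
    · exact ⟨_, hX, (emb_of_notMem heX).symm⟩
  · rintro ⟨X, hX, rfl⟩
    by_cases heX : e ∈ X
    · exact ⟨X, hX, Or.inl ⟨heX, emb_of_mem heX⟩⟩
    · exact ⟨X, hX, Or.inr ⟨heX, emb_of_notMem heX⟩⟩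


lemma mem_embedFamily_iff' {𝓔 𝓓 : Set (Set α)} {e : α} {D Y : Set α} :
    Y ∈ embedFamily 𝓔 e D 𝓓 ↔ Y ∈ 𝓓 ∨ ∃ X ∈ 𝓔, Y = emb e D X :=
  mem_embedFamily_iff

theorem embedFamily_satisfies_axioms (E D : Set α) (hE : E.Finite) (hD : D.Finite)
    (hdisj : Disjoint E D) (𝓔 𝓓 : Set (Set α))
    (h𝓔 : SatisfiesAxioms E 𝓔) (h𝓓 : SatisfiesAxioms D 𝓓)
    (e : α) (he : e ∈ E) :
    SatisfiesAxioms ((E \ {e}) ∪ D) (embedFamily 𝓔 e D 𝓓) := by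
  classical
  obtain ⟨hE0, ⟨hE1s, hE1e, hE1F⟩, hE2, hE3, hE4, hE5⟩ := h𝓔
  obtain ⟨hD0, ⟨hD1s, hD1e, hD1F⟩, hD2, hD3, hD4, hD5⟩ := h𝓓
  have hDne : D.Nonempty := Set.nonempty_iff_ne_empty.mpr fun h => hD1e (h ▸ hD1F)
  have hdisj' : ∀ {X : Set α}, X ∈ 𝓔 → ∀ a ∈ D, a ∉ X :=
    fun {X} hX a ha hax => Set.disjoint_left.mp hdisj (hE0 X hX hax) ha
  set 𝓖 := embedFamily 𝓔 e D 𝓓 with h𝓖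
  have memG : ∀ {Y : Set α}, Y ∈ 𝓖 ↔ Y ∈ 𝓓 ∨ ∃ X ∈ 𝓔, Y = emb e D X :=
    fun {Y} => mem_embedFamily_iff'
  have embmem : ∀ {X : Set α}, X ∈ 𝓔 → emb e D X ∈ 𝓖 :=
    fun {X} hX => memG.mpr (Or.inr ⟨X, hX, rfl⟩)
  have Dmem : D ∈ 𝓖 := memG.mpr (Or.inl hD1F)
  have embD : emb e D {e} = D := by
    rw [emb_of_mem (Set.mem_singleton e)]; simp
  have Ene : ∀ {X : Set α}, X ∈ 𝓔 → X.Nonempty :=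
    fun {X} hX => Set.nonempty_iff_ne_empty.mpr fun h => hE1e (h ▸ hX)
  -- the key structural lemma: members of 𝓖 contained in D are members of 𝓓
  have subD : ∀ {Y : Set α}, Y ∈ 𝓖 → Y ⊆ D → Y ∈ 𝓓 := by
    intro Y hY hYD
    rcases memG.mp hY with h | ⟨X, hX, rfl⟩
    · exact h
    · by_cases heX : e ∈ X
      · have hXe : X = {e} := by
          apply Set.Subset.antisymm _ (Set.singleton_subset_iff.mpr heX)
          intro a ha
          by_contra hne
          have haD : a ∈ D := hYD (mem_emb_iff.mpr (Or.inl ⟨ha, hne⟩))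
          exact hdisj' hX a haD ha
        rw [hXe, embD]; exact hD1F
      · exfalso
        rw [emb_of_notMem heX] at hYD
        obtain ⟨a, ha⟩ := Ene hX
        exact hdisj' hX a (hYD ha) ha
  have DsubEmb : ∀ {X : Set α}, e ∈ X → D ⊆ emb e D X :=
    fun {X} heX a ha => mem_emb_iff.mpr (Or.inr ⟨heX, ha⟩)
  have embMono : ∀ {X X' : Set α}, X ∈ 𝓔 → X' ∈ 𝓔 →
      (emb e D X ⊆ emb e D X' ↔ X ⊆ X') :=
    fun {X X'} h h' => emb_subset_iff hDne (hdisj' h) (hdisj' h')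
  have embInj : ∀ {X X' : Set α}, X ∈ 𝓔 → X' ∈ 𝓔 → emb e D X = emb e D X' → X = X' :=
    fun {X X'} h h' => emb_inj hDne (hdisj' h) (hdisj' h')
  have bowtie_iff : ∀ {X X' : Set α}, X ∈ 𝓔 → X' ∈ 𝓔 →
      (Bowtie (emb e D X) (emb e D X') ↔ Bowtie X X') := by
    intro X X' h h'
    unfold Bowtie
    rw [← emb_inter (hdisj' h) (hdisj' h'), ← emb_diff (hdisj' h) (hdisj' h'),
      ← emb_diff (hdisj' h') (hdisj' h), emb_nonempty hDne, emb_nonempty hDne,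
      emb_nonempty hDne]
  ------------------------------------------------------------------
  refine ⟨?_, ⟨?_, ?_, ?_⟩, ?_, ?_, ?_, ?_⟩
  -- A0 : all members are subsets of (E \ {e}) ∪ D
  · intro Y hY
    rcases memG.mp hY with g | ⟨X, hX, rfl⟩
    · exact (hD0 _ g).trans Set.subset_union_right
    · intro a ha
      rcases mem_emb_iff.mp ha with ⟨haX, hae⟩ | ⟨-, haD⟩
      · exact Or.inl ⟨hE0 _ hX haX, hae⟩
      · exact Or.inr haD
  -- A1 : singletons
  · rintro f (⟨hfE, hfe⟩ | hfD)
    · refine memG.mpr (Or.inr ⟨{f}, hE1s f hfE, ?_⟩)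
      rw [emb_of_notMem (by simpa using Ne.symm hfe)]
    · exact memG.mpr (Or.inl (hD1s f hfD))
  -- A1 : empty set not a member
  · intro h
    rcases memG.mp h with g | ⟨X, hX, hXe⟩
    · exact hD1e g
    · exact hE1e (((emb_eq_empty hDne).mp hXe.symm) ▸ hX)
  -- A1 : full set
  · exact memG.mpr (Or.inr ⟨E, hE1F, (emb_of_mem he).symm⟩)
  -- A2
  · intro C₁ h₁ C₂ h₂ hne
    rcases memG.mp h₁ with g₁ | ⟨X₁, hX₁, rfl⟩
    · rcases memG.mp h₂ with g₂ | ⟨X₂, hX₂, rfl⟩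
      · obtain ⟨hu, hi⟩ := hD2 _ g₁ _ g₂ hne
        exact ⟨memG.mpr (Or.inl hu), memG.mpr (Or.inl hi)⟩
      · have hC₁D : C₁ ⊆ D := hD0 _ g₁
        by_cases heX : e ∈ X₂
        · have hsub : C₁ ⊆ emb e D X₂ := hC₁D.trans (DsubEmb heX)
          rw [Set.union_eq_right.mpr hsub, Set.inter_eq_left.mpr hsub]
          exact ⟨embmem hX₂, memG.mpr (Or.inl g₁)⟩
        · exfalso
          obtain ⟨a, ha₁, ha₂⟩ := hne
          rw [emb_of_notMem heX] at ha₂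
          exact hdisj' hX₂ a (hC₁D ha₁) ha₂
    · rcases memG.mp h₂ with g₂ | ⟨X₂, hX₂, rfl⟩
      · have hC₂D : C₂ ⊆ D := hD0 _ g₂
        by_cases heX : e ∈ X₁
        · have hsub : C₂ ⊆ emb e D X₁ := hC₂D.trans (DsubEmb heX)
          rw [Set.union_eq_left.mpr hsub, Set.inter_eq_right.mpr hsub]
          exact ⟨embmem hX₁, memG.mpr (Or.inl g₂)⟩
        · exfalso
          obtain ⟨a, ha₁, ha₂⟩ := hne
          rw [emb_of_notMem heX] at ha₁
          exact hdisj' hX₁ a (hC₂D ha₂) ha₁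
      · rw [← emb_inter (hdisj' hX₁) (hdisj' hX₂)] at hne ⊢
        rw [← emb_union]
        have hXne : (X₁ ∩ X₂).Nonempty := (emb_nonempty hDne).mp hne
        obtain ⟨hu, hi⟩ := hE2 _ hX₁ _ hX₂ hXne
        exact ⟨embmem hu, embmem hi⟩
  -- A3
  · intro C₁ h₁ C₂ h₂ hbt
    rcases memG.mp h₁ with g₁ | ⟨X₁, hX₁, rfl⟩
    · rcases memG.mp h₂ with g₂ | ⟨X₂, hX₂, rfl⟩
      · obtain ⟨hu, hi⟩ := hD3 _ g₁ _ g₂ hbt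
        exact ⟨memG.mpr (Or.inl hu), memG.mpr (Or.inl hi)⟩
      · exfalso
        have hC₁D : C₁ ⊆ D := hD0 _ g₁
        by_cases heX : e ∈ X₂
        · obtain ⟨a, ha, hna⟩ := hbt.2.1
          exact hna (DsubEmb heX (hC₁D ha))
        · obtain ⟨a, ha₁, ha₂⟩ := hbt.1
          rw [emb_of_notMem heX] at ha₂
          exact hdisj' hX₂ a (hC₁D ha₁) ha₂
    · rcases memG.mp h₂ with g₂ | ⟨X₂, hX₂, rfl⟩
      · exfalso
        have hC₂D : C₂ ⊆ D := hD0 _ g₂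
        by_cases heX : e ∈ X₁
        · obtain ⟨a, ha, hna⟩ := hbt.2.2
          exact hna (DsubEmb heX (hC₂D ha))
        · obtain ⟨a, ha₁, ha₂⟩ := hbt.1
          rw [emb_of_notMem heX] at ha₁
          exact hdisj' hX₁ a (hC₂D ha₂) ha₁
      · have hbt' := (bowtie_iff hX₁ hX₂).mp hbt
        obtain ⟨hu, hi⟩ := hE3 _ hX₁ _ hX₂ hbt'
        rw [← emb_diff (hdisj' hX₁) (hdisj' hX₂), ← emb_diff (hdisj' hX₂) (hdisj' hX₁)]
        exact ⟨embmem hu, embmem hi⟩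
  -- A4
  · intro Y hY
    by_cases hemb : ∃ X ∈ 𝓔, Y = emb e D X
    · obtain ⟨X, hX, rfl⟩ := hemb
      have key : {Z | IsProperMinimalSuperset 𝓖 (emb e D X) Z} ⊆
          (emb e D) '' {Z | IsProperMinimalSuperset 𝓔 X Z} := by
        rintro Z ⟨hZG, hsub, hne, hmin⟩
        rcases memG.mp hZG with gZ | ⟨X', hX', rfl⟩
        · exfalso
          have hZD : Z ⊆ D := hD0 _ gZ
          have hXD : emb e D X ⊆ D := hsub.trans hZD
          have heX : e ∈ X := by
            by_contra heX
            rw [emb_of_notMem heX] at hXD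
            obtain ⟨a, ha⟩ := Ene hX
            exact hdisj' hX a (hXD ha) ha
          have hXe : X = {e} := by
            apply Set.Subset.antisymm _ (Set.singleton_subset_iff.mpr heX)
            intro a ha
            by_contra hane
            exact hdisj' hX a (hXD (mem_emb_iff.mpr (Or.inl ⟨ha, hane⟩))) ha
          rw [hXe, embD] at hsub hne
          exact hne (Set.Subset.antisymm hsub hZD)
        · refine ⟨X', ⟨hX', (embMono hX hX').mp hsub, fun h => hne (h ▸ rfl), ?_⟩, rfl⟩
          intro W hW hXW hWX'
          rcases hmin (emb e D W) (embmem hW) ((embMono hX hW).mpr hXW)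
              ((embMono hW hX').mpr hWX') with h | h
          · exact Or.inl (embInj hW hX h)
          · exact Or.inr (embInj hW hX' h)
      calc {Z | IsProperMinimalSuperset 𝓖 (emb e D X) Z}.encard
          ≤ ((emb e D) '' {Z | IsProperMinimalSuperset 𝓔 X Z}).encard :=
            Set.encard_le_encard key
        _ ≤ {Z | IsProperMinimalSuperset 𝓔 X Z}.encard := Set.encard_image_le _ _
        _ ≤ 2 := hE4 X hX
    · have gY : Y ∈ 𝓓 := by
        rcases memG.mp hY with g | h
        · exact g
        · exact absurd h hemb
      have hYnD : Y ≠ D := fun h => hemb ⟨{e}, hE1s e he, by rw [h, embD]⟩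
      have hYD : Y ⊆ D := hD0 _ gY
      have key : {Z | IsProperMinimalSuperset 𝓖 Y Z} ⊆
          {Z | IsProperMinimalSuperset 𝓓 Y Z} := by
        rintro Z ⟨hZG, hsub, hne, hmin⟩
        have hZD : Z ∈ 𝓓 := by
          rcases memG.mp hZG with gZ | ⟨X', hX', rfl⟩
          · exact gZ
          · by_cases heX : e ∈ X'
            · rcases hmin D Dmem hYD (DsubEmb heX) with h | h
              · exact absurd h.symm hYnD
              · rw [← h]; exact hD1F
            · exfalso
              obtain ⟨a, ha⟩ : Y.Nonempty :=
                Set.nonempty_iff_ne_empty.mpr (fun h => hD1e (h ▸ gY))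
              have := hsub ha
              rw [emb_of_notMem heX] at this
              exact hdisj' hX' a (hYD ha) this
        exact ⟨hZD, hsub, hne, fun W hW => hmin W (memG.mpr (Or.inl hW))⟩
      exact (Set.encard_le_encard key).trans (hD4 Y gY)
  -- A5
  · rintro ⟨k, A, hk3, hAmem, hchain⟩
    haveI : NeZero k := ⟨by omega⟩
    by_cases hall : ∀ i, A i ⊆ D
    · exact hD5 ⟨k, A, hk3, fun i => subD (hAmem i) (hall i), hchain⟩
    · push_neg at hall
      obtain ⟨j, hj⟩ := hall
      have step : ∀ i : ZMod k, (A i ⊆ D ↔ A (i + 1) ⊆ D) := by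
        intro i
        have hbt : Bowtie (A i) (A (i + 1)) := by
          have h := (hchain (i + 1)).1
          simpa using h
        constructor
        · intro hPi
          rcases memG.mp (hAmem (i + 1)) with g | ⟨X, hX, hAe⟩
          · exact hD0 _ g
          · exfalso
            by_cases heX : e ∈ X
            · obtain ⟨a, ha, hna⟩ := hbt.2.1
              rw [hAe] at hna
              exact hna (DsubEmb heX (hPi ha))
            · obtain ⟨a, ha₁, ha₂⟩ := hbt.1
              rw [hAe, emb_of_notMem heX] at ha₂
              exact hdisj' hX a (hPi ha₁) ha₂
        · intro hPi
          rcases memG.mp (hAmem i) with g | ⟨X, hX, hAe⟩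
          · exact hD0 _ g
          · exfalso
            by_cases heX : e ∈ X
            · obtain ⟨a, ha, hna⟩ := hbt.2.2
              rw [hAe] at hna
              exact hna (DsubEmb heX (hPi ha))
            · obtain ⟨a, ha₁, ha₂⟩ := hbt.1
              rw [hAe, emb_of_notMem heX] at ha₁
              exact hdisj' hX a (hPi ha₂) ha₁
      have propagate : ∀ (n : ℕ) (i : ZMod k), A i ⊆ D → A (i + n) ⊆ D := by
        intro n
        induction n with
        | zero => intro i h; simpa using h
        | succ m ih =>
          intro i h
          have h1 := (step (i + m)).mp (ih i h)
          have : ((m + 1 : ℕ) : ZMod k) = (m : ZMod k) + 1 := by push_cast; ring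
          rw [this, ← add_assoc]
          exact h1
      have none : ∀ i, ¬ A i ⊆ D := by
        intro i hi
        apply hj
        obtain ⟨n, hn⟩ := ZMod.natCast_zmod_surjective (j - i)
        have h := propagate n i hi
        rw [hn] at h
        rwa [show i + (j - i) = j by ring] at h
      have choice : ∀ i, ∃ X, X ∈ 𝓔 ∧ A i = emb e D X := by
        intro i
        rcases memG.mp (hAmem i) with g | ⟨X, hX, hAe⟩
        · exact absurd (hD0 _ g) (none i)
        · exact ⟨X, hX, hAe⟩
      choose X hXmem hXeq using choice
      apply hE5
      refine ⟨k, X, hk3, hXmem, fun i => ?_⟩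
      obtain ⟨hbt, htriple, hcover⟩ := hchain i
      rw [hXeq (i - 1), hXeq i] at hbt
      rw [hXeq (i - 1), hXeq i, hXeq (i + 1)] at htriple hcover
      refine ⟨(bowtie_iff (hXmem (i - 1)) (hXmem i)).mp hbt, ?_, ?_⟩
      · have h12 : ∀ a ∈ D, a ∉ X (i - 1) ∩ X i :=
          fun a ha h' => hdisj' (hXmem (i - 1)) a ha h'.1
        rw [← emb_inter (hdisj' (hXmem (i - 1))) (hdisj' (hXmem i)),
          ← emb_inter h12 (hdisj' (hXmem (i + 1)))] at htriple
        exact (emb_eq_empty hDne).mp htriple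
      · rw [← emb_union] at hcover
        have hcup : ∀ a ∈ D, a ∉ X (i - 1) ∪ X (i + 1) := by
          rintro a ha (h' | h')
          · exact hdisj' (hXmem (i - 1)) a ha h'
          · exact hdisj' (hXmem (i + 1)) a ha h'
        exact (emb_subset_iff hDne (hdisj' (hXmem i)) hcup).mp hcover
end

section
/- Any irreducible family ℱ of subsets of a finite set F satisfying axioms A1–A5 is either a string of sausages over F or a fat sausage over F. -/
variable {α : Type*}

/-- `Y` is a proper subset of `Z`: `Y ⊆ Z` and `1 < |Y| < |Z|`. -/
def IsProperSubsetOf (Y Z : Set α) : Prop :=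
  Y ⊆ Z ∧ 1 < Y.ncard ∧ Y.ncard < Z.ncard

/-- `𝓔` is a subfamily of `𝓕` with support `E`. -/
def IsSubfamilyWithSupport (𝓕 𝓔 : Set (Set α)) (E : Set α) : Prop :=
  E ∈ 𝓕 ∧ 𝓔 = {X ∈ 𝓕 | X ⊆ E} ∧ ∀ X ∈ 𝓕, X ∉ 𝓔 → E ⊆ X ∨ X ∩ E = ∅

/-- The family `𝓕` over ground set `F` has no proper subfamilies. -/
def IrreducibleFamily (F : Set α) (𝓕 : Set (Set α)) : Prop :=
  ¬∃ (𝓔 : Set (Set α)) (E : Set α),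
      IsSubfamilyWithSupport 𝓕 𝓔 E ∧ IsProperSubsetOf E F

/-- `𝓕` is a string of sausages over `F`: the family of all intervals of some
enumeration of `F`. -/
def IsStringOfSausages (F : Set α) (𝓕 : Set (Set α)) : Prop :=
  ∃ (m : ℕ) (f : Fin m → α), Function.Injective f ∧ Set.range f = F ∧
    𝓕 = {S | ∃ i j : Fin m, i ≤ j ∧ S = f '' Set.Icc i j}

/-- `𝓕` is a fat sausage over `F`: the whole set together with all singletons. -/
def IsFatSausage (F : Set α) (𝓕 : Set (Set α)) : Prop :=
  𝓕 = ({F} : Set (Set α)) ∪ {S | ∃ x ∈ F, S = ({x} : Set α)}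

namespace SausageProof

variable {α : Type*}

/-- Interval of a chain. -/
def Intv (s : ℕ → α) (i j : ℕ) : Set α := s '' Set.Icc i j

/-- Vertex set of a chain. -/
def CSet (k : ℕ) (s : ℕ → α) : Set α := s '' Set.Iio k

structure IsChain (𝓕 : Set (Set α)) (k : ℕ) (s : ℕ → α) : Prop where
  two_le : 2 ≤ k
  inj : Set.InjOn s (Set.Iio k)
  edge : ∀ i, i + 1 < k → ({s i, s (i+1)} : Set α) ∈ 𝓕

def IsGoodChain (𝓕 : Set (Set α)) (k : ℕ) (s : ℕ → α) : Prop :=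
  IsChain 𝓕 k s ∧
    ∀ x y, x ∈ CSet k s → ({x, y} : Set α) ∈ 𝓕 → y ≠ x → y ∈ CSet k s

section Basic

variable {F : Set α} {𝓕 : Set (Set α)}

lemma bowtie_symm {X Y : Set α} (h : Bowtie X Y) : Bowtie Y X :=
  ⟨by rw [Set.inter_comm]; exact h.1, h.2.2, h.2.1⟩

lemma mem_subset (hax : SatisfiesAxioms F 𝓕) {X : Set α} (hX : X ∈ 𝓕) : X ⊆ F :=
  hax.1 X hX

lemma mem_finite (hF : F.Finite) (hax : SatisfiesAxioms F 𝓕) {X : Set α}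
    (hX : X ∈ 𝓕) : X.Finite := hF.subset (hax.1 X hX)

lemma mem_nonempty (hax : SatisfiesAxioms F 𝓕) {X : Set α} (hX : X ∈ 𝓕) :
    X.Nonempty := by
  rcases X.eq_empty_or_nonempty with h | h
  · exact absurd (h ▸ hX) hax.2.1.2.1
  · exact h

lemma inter_mem (hax : SatisfiesAxioms F 𝓕) {X Y : Set α} (hX : X ∈ 𝓕) (hY : Y ∈ 𝓕)
    (h : (X ∩ Y).Nonempty) : X ∩ Y ∈ 𝓕 := (hax.2.2.1 X hX Y hY h).2

lemma union_mem (hax : SatisfiesAxioms F 𝓕) {X Y : Set α} (hX : X ∈ 𝓕) (hY : Y ∈ 𝓕)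
    (h : (X ∩ Y).Nonempty) : X ∪ Y ∈ 𝓕 := (hax.2.2.1 X hX Y hY h).1

lemma diff_mem (hax : SatisfiesAxioms F 𝓕) {X Y : Set α} (hX : X ∈ 𝓕) (hY : Y ∈ 𝓕)
    (h : Bowtie X Y) : X \ Y ∈ 𝓕 := (hax.2.2.2.1 X hX Y hY h).1

/-- If no member bowties `E`, then `E` supports a subfamily. -/
lemma cross_exists (hax : SatisfiesAxioms F 𝓕) (hirr : IrreducibleFamily F 𝓕)
    {E : Set α} (hE : E ∈ 𝓕) (h1 : 1 < E.ncard) (h2 : E.ncard < F.ncard) :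
    ∃ X ∈ 𝓕, Bowtie X E := by
  by_contra hcon
  push_neg at hcon
  refine hirr ⟨{X ∈ 𝓕 | X ⊆ E}, E, ⟨hE, rfl, ?_⟩, hax.1 E hE, h1, h2⟩
  intro X hX hXE
  simp only [Set.mem_setOf_eq, not_and] at hXE
  have hnsub : ¬X ⊆ E := hXE hX
  rcases (X ∩ E).eq_empty_or_nonempty with h | h
  · exact Or.inr h
  · left
    by_contra hEX
    exact hcon X hX ⟨h, Set.diff_nonempty.mpr hnsub, Set.diff_nonempty.mpr hEX⟩

/-- Every member of size in `[2, |F|)` contains a pair member. -/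
lemma pair_exists (hF : F.Finite) (hax : SatisfiesAxioms F 𝓕)
    (hirr : IrreducibleFamily F 𝓕) :
    ∀ n : ℕ, ∀ Y ∈ 𝓕, Y.ncard = n → 2 ≤ Y.ncard → Y.ncard < F.ncard →
      ∃ a b : α, a ≠ b ∧ ({a, b} : Set α) ⊆ Y ∧ ({a, b} : Set α) ∈ 𝓕 := by
  intro n
  induction n using Nat.strong_induction_on with
  | _ n ih =>
    intro Y hY hYn h2 hlt
    have hYfin : Y.Finite := mem_finite hF hax hY
    rcases eq_or_lt_of_le h2 with h2' | h3
    · -- |Y| = 2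
      obtain ⟨a, b, hab, rfl⟩ := Set.ncard_eq_two.mp h2'.symm
      exact ⟨a, b, hab, le_refl _, hY⟩
    · -- |Y| ≥ 3: split
      obtain ⟨W, hW, hbow⟩ := cross_exists hax hirr hY (by omega) hlt
      have hP : Y ∩ W ∈ 𝓕 := inter_mem hax hY hW (by
        rw [Set.inter_comm]; exact hbow.1)
      have hQ : Y \ W ∈ 𝓕 := diff_mem hax hY hW (bowtie_symm hbow)
      have hPne : (Y ∩ W).Nonempty := by rw [Set.inter_comm]; exact hbow.1
      have hQne : (Y \ W).Nonempty := hbow.2.2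
      have hPQ : (Y ∩ W) ∪ (Y \ W) = Y := Set.inter_union_diff Y W
      have hcard : (Y ∩ W).ncard + (Y \ W).ncard = Y.ncard :=
        Set.ncard_inter_add_ncard_diff_eq_ncard Y W hYfin
      have hPpos : 0 < (Y ∩ W).ncard := (Set.ncard_pos (hYfin.inter_of_left W)).mpr hPne
      have hQpos : 0 < (Y \ W).ncard := (Set.ncard_pos hYfin.diff).mpr hQne
      rcases le_or_gt 2 (Y ∩ W).ncard with hc | hc
      · obtain ⟨a, b, hab, hsub, hmem⟩ := ih (Y ∩ W).ncard (by omega) (Y ∩ W) hP rfl hc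
          (by omega)
        exact ⟨a, b, hab, hsub.trans Set.inter_subset_left, hmem⟩
      · have hc2 : 2 ≤ (Y \ W).ncard := by omega
        obtain ⟨a, b, hab, hsub, hmem⟩ := ih (Y \ W).ncard (by omega) (Y \ W) hQ rfl hc2
          (by omega)
        exact ⟨a, b, hab, hsub.trans Set.diff_subset, hmem⟩

end Basic

end SausageProof
namespace SausageProof

variable {α : Type*} {F : Set α} {𝓕 : Set (Set α)}

lemma subset_pair_cases {x y : α} {Y : Set α} (hY : Y ⊆ {x, y}) (hx : x ∈ Y) :
    Y = {x} ∨ Y = ({x, y} : Set α) := by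
  by_cases hy : y ∈ Y
  · right
    apply Set.Subset.antisymm hY
    intro z hz
    rcases hz with rfl | hz
    · exact hx
    · rwa [Set.mem_singleton_iff.mp hz]
  · left
    apply Set.Subset.antisymm
    · intro z hz
      rcases hY hz with h | h
      · exact h
      · exact absurd (Set.mem_singleton_iff.mp h ▸ hz) hy
    · exact Set.singleton_subset_iff.mpr hx

lemma pair_min_superset (hax : SatisfiesAxioms F 𝓕) {x y : α} (hxy : x ≠ y)
    (hp : ({x, y} : Set α) ∈ 𝓕) :
    IsProperMinimalSuperset 𝓕 {x} {x, y} := by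
  refine ⟨hp, by simp, ?_, ?_⟩
  · intro h
    exact hxy (by
      have : y ∈ ({x} : Set α) := h ▸ (by simp : y ∈ ({x, y} : Set α))
      simpa using this.symm)
  · intro Y _ hxY hYp
    rcases subset_pair_cases hYp (hxY rfl) with h | h
    · exact Or.inl h
    · exact Or.inr h

lemma three_min_supersets_absurd (hax : SatisfiesAxioms F 𝓕) {X Z₁ Z₂ Z₃ : Set α}
    (hX : X ∈ 𝓕) (h1 : IsProperMinimalSuperset 𝓕 X Z₁)
    (h2 : IsProperMinimalSuperset 𝓕 X Z₂) (h3 : IsProperMinimalSuperset 𝓕 X Z₃)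
    (h12 : Z₁ ≠ Z₂) (h13 : Z₁ ≠ Z₃) (h23 : Z₂ ≠ Z₃) : False := by
  have hsub : ({Z₁, Z₂, Z₃} : Set (Set α)) ⊆ {Z | IsProperMinimalSuperset 𝓕 X Z} := by
    intro Z hZ
    rcases hZ with rfl | rfl | hZ
    · exact h1
    · exact h2
    · exact Set.mem_singleton_iff.mp hZ ▸ h3
  have h3' : ({Z₁, Z₂, Z₃} : Set (Set α)).encard = 3 := by
    rw [Set.encard_insert_of_notMem (by simp [h12, h13]),
      Set.encard_insert_of_notMem (by simp [h23]), Set.encard_singleton]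
    rfl
  have := (h3' ▸ Set.encard_le_encard hsub).trans (hax.2.2.2.2.1 X hX)
  norm_num at this

/-- Degree bound: no element has three distinct pair-neighbours. -/
lemma degree_le_two (hax : SatisfiesAxioms F 𝓕) {x a b c : α}
    (ha : ({x, a} : Set α) ∈ 𝓕) (hb : ({x, b} : Set α) ∈ 𝓕)
    (hc : ({x, c} : Set α) ∈ 𝓕) (hxa : a ≠ x) (hxb : b ≠ x) (hxc : c ≠ x)
    (hab : a ≠ b) (hac : a ≠ c) (hbc : b ≠ c) : False := by
  have hxF : x ∈ F := hax.1 _ ha (by simp)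
  have hxs : ({x} : Set α) ∈ 𝓕 := hax.2.1.1 x hxF
  have key : ∀ u v : α, u ≠ x → v ≠ x → u ≠ v → ({x, u} : Set α) ≠ {x, v} := by
    intro u v hu hv huv heq
    have : u ∈ ({x, v} : Set α) := heq ▸ (by simp : u ∈ ({x, u} : Set α))
    rcases this with h | h
    · exact hu h
    · exact huv h
  exact three_min_supersets_absurd hax hxs
    (pair_min_superset hax (Ne.symm hxa) ha)
    (pair_min_superset hax (Ne.symm hxb) hb)
    (pair_min_superset hax (Ne.symm hxc) hc)
    (key a b hxa hxb hab) (key a c hxa hxc hac) (key b c hxb hxc hbc)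

/-- Existence of a minimal proper superset inside a given member. -/
lemma min_superset_exists (hF : F.Finite) (hax : SatisfiesAxioms F 𝓕)
    {X W : Set α} (hX : X ∈ 𝓕) (hW : W ∈ 𝓕) (hXW : X ⊆ W) (hne : X ≠ W) :
    ∃ Z, IsProperMinimalSuperset 𝓕 X Z ∧ Z ⊆ W := by
  set T : Set ℕ := {m | ∃ Z ∈ 𝓕, X ⊆ Z ∧ X ≠ Z ∧ Z ⊆ W ∧ Z.ncard = m} with hT
  have hTne : T.Nonempty := ⟨W.ncard, W, hW, hXW, hne, subset_rfl, rfl⟩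
  obtain ⟨Z, hZ, hXZ, hXne, hZW, hZm⟩ := Nat.sInf_mem hTne
  refine ⟨Z, ⟨hZ, hXZ, hXne, ?_⟩, hZW⟩
  intro Y hY hXY hYZ
  by_contra hcon
  push_neg at hcon
  have hYlt : Y.ncard < Z.ncard :=
    Set.ncard_lt_ncard (ssubset_of_subset_of_ne hYZ hcon.2) (mem_finite hF hax hZ)
  have : Y.ncard ∈ T := ⟨Y, hY, hXY, fun h => hcon.1 h.symm, hYZ.trans hZW, rfl⟩
  have := Nat.sInf_le this
  omega

end SausageProof
namespace SausageProof

variable {α : Type*} {F : Set α} {𝓕 : Set (Set α)} {k : ℕ} {s : ℕ → α}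

lemma IsChain.mem_F (hax : SatisfiesAxioms F 𝓕) (hc : IsChain 𝓕 k s) {i : ℕ}
    (hi : i < k) : s i ∈ F := by
  rcases lt_or_ge (i + 1) k with h | h
  · exact hax.1 {s i, s (i+1)} (hc.edge i h) (Set.mem_insert _ _)
  · have hi1 : 1 ≤ i := by have := hc.two_le; omega
    have h' : (i - 1) + 1 < k := by omega
    have heq : i - 1 + 1 = i := by omega
    refine hax.1 {s (i-1), s (i-1+1)} (hc.edge (i - 1) h') ?_
    rw [heq]
    exact Set.mem_insert_iff.mpr (Or.inr rfl)

lemma mem_intv_iff (hc : IsChain 𝓕 k s) {i j x : ℕ} (hj : j < k) (hx : x < k) :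
    s x ∈ Intv s i j ↔ i ≤ x ∧ x ≤ j := by
  constructor
  · rintro ⟨y, hy, hyx⟩
    have : y = x := hc.inj (lt_of_le_of_lt hy.2 hj) hx hyx
    exact this ▸ hy
  · intro h
    exact ⟨x, h, rfl⟩

lemma mem_cset (hx : x < k) : s x ∈ CSet k s := ⟨x, hx, rfl⟩

lemma cset_mem_elim {z : α} (hz : z ∈ CSet k s) : ∃ i, i < k ∧ s i = z := by
  obtain ⟨i, hi, rfl⟩ := hz
  exact ⟨i, hi, rfl⟩

lemma intv_subset_cset {i j : ℕ} (hj : j < k) : Intv s i j ⊆ CSet k s := by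
  rintro x ⟨y, hy, rfl⟩
  exact ⟨y, lt_of_le_of_lt hy.2 hj, rfl⟩

lemma cset_eq_intv (hk : 1 ≤ k) : CSet k s = Intv s 0 (k - 1) := by
  have h : Set.Iio k = Set.Icc 0 (k - 1) := by
    ext x
    simp only [Set.mem_Iio, Set.mem_Icc]
    omega
  unfold CSet Intv
  rw [h]

lemma intv_mem (hax : SatisfiesAxioms F 𝓕) (hc : IsChain 𝓕 k s) :
    ∀ d i j : ℕ, j - i = d → i ≤ j → j < k → Intv s i j ∈ 𝓕 := by
  intro d
  induction d with
  | zero =>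
    intro i j hd hij hj
    have hji : j = i := by omega
    subst hji
    have : Intv s j j = {s j} := by
      unfold Intv
      rw [Set.Icc_self, Set.image_singleton]
    rw [this]
    exact hax.2.1.1 _ (hc.mem_F hax hj)
  | succ d ihd =>
    intro i j hd hij hj
    have hij' : i ≤ j - 1 := by omega
    have hprev : Intv s i (j - 1) ∈ 𝓕 := ihd i (j - 1) (by omega) hij' (by omega)
    have hedge : ({s (j - 1), s (j - 1 + 1)} : Set α) ∈ 𝓕 := hc.edge (j - 1) (by omega)
    have hj1 : j - 1 + 1 = j := by omega
    rw [hj1] at hedge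
    have hidx : Set.Icc i (j - 1) ∪ ({j - 1, j} : Set ℕ) = Set.Icc i j := by
      ext x
      simp only [Set.mem_union, Set.mem_Icc, Set.mem_insert_iff, Set.mem_singleton_iff]
      omega
    have hunion : Intv s i (j - 1) ∪ {s (j - 1), s j} = Intv s i j := by
      unfold Intv
      rw [← Set.image_pair, ← Set.image_union, hidx]
    have hinter : (Intv s i (j - 1) ∩ {s (j - 1), s j}).Nonempty :=
      ⟨s (j - 1), ⟨j - 1, ⟨hij', le_rfl⟩, rfl⟩, Set.mem_insert _ _⟩
    have := union_mem hax hprev hedge hinter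
    rwa [hunion] at this

lemma intv_mem' (hax : SatisfiesAxioms F 𝓕) (hc : IsChain 𝓕 k s) {i j : ℕ}
    (hij : i ≤ j) (hj : j < k) : Intv s i j ∈ 𝓕 :=
  intv_mem hax hc (j - i) i j rfl hij hj

lemma cset_mem (hax : SatisfiesAxioms F 𝓕) (hc : IsChain 𝓕 k s) : CSet k s ∈ 𝓕 := by
  rw [cset_eq_intv (by have := hc.two_le; omega)]
  exact intv_mem' hax hc (by omega) (by have := hc.two_le; omega)

lemma cset_ncard (hc : IsChain 𝓕 k s) : (CSet k s).ncard = k := by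
  unfold CSet
  rw [Set.ncard_image_of_injOn hc.inj]
  have : (Set.Iio k : Set ℕ) = ↑(Finset.range k) := by
    ext x; simp
  rw [this, Set.ncard_coe_finset, Finset.card_range]

/-- No chords: an edge between non-consecutive chain vertices gives a bicycle chain. -/
lemma no_chord (hax : SatisfiesAxioms F 𝓕) (hc : IsChain 𝓕 k s) {i j : ℕ}
    (hij : i + 2 ≤ j) (hj : j < k) (hchord : ({s i, s j} : Set α) ∈ 𝓕) : False := by
  set mc := j - i + 1 with hmc
  have hmc3 : 3 ≤ mc := by omega
  haveI : NeZero mc := ⟨by omega⟩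
  set g : ZMod mc → α := fun t => s (i + t.val) with hg
  have hbd : ∀ t : ZMod mc, i + t.val < k := by
    intro t
    have := ZMod.val_lt t
    omega
  have hginj : Function.Injective g := by
    intro t t' h
    have h1 := hbd t
    have h2 := hbd t'
    have h3 := hc.inj h1 h2 h
    exact ZMod.val_injective mc (by omega)
  have hone : (1 : ZMod mc) ≠ 0 := by
    intro h
    have h2 := congrArg ZMod.val h
    haveI : Fact (1 < mc) := ⟨by omega⟩
    rw [ZMod.val_one mc, ZMod.val_zero] at h2
    omega
  have htwo : (2 : ZMod mc) ≠ 0 := by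
    intro h
    have h2 : ((2 : ℕ) : ZMod mc) = 0 := by push_cast; exact h
    have h3 := congrArg ZMod.val h2
    rw [ZMod.val_cast_of_lt (by omega), ZMod.val_zero] at h3
    omega
  have hdiff : ∀ a b : ZMod mc, (b - a = 1 ∨ b - a = 2) → a ≠ b := by
    rintro a b (h | h) rfl
    · rw [sub_self] at h; exact hone h.symm
    · rw [sub_self] at h; exact htwo h.symm
  set A : ZMod mc → Set α := fun t => {g t, g (t + 1)} with hA
  have hApred : ∀ t : ZMod mc, A (t - 1) = {g (t - 1), g t} := by
    intro t
    rw [hA]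
    simp only [sub_add_cancel]
  have hAmem : ∀ t : ZMod mc, A t ∈ 𝓕 := by
    intro t
    have hcast : ((t.val : ℕ) : ZMod mc) = t := ZMod.natCast_rightInverse t
    rcases lt_or_ge (t.val + 1) mc with h | h
    · have h1 : t + 1 = ((t.val + 1 : ℕ) : ZMod mc) := by
        rw [Nat.cast_add, Nat.cast_one, hcast]
      have h2 : (t + 1).val = t.val + 1 := by
        rw [h1, ZMod.val_cast_of_lt h]
      have : A t = {s (i + t.val), s (i + t.val + 1)} := by
        rw [hA]
        simp only [hg, h2]
        rw [← Nat.add_assoc]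
      rw [this]
      exact hc.edge (i + t.val) (by have := ZMod.val_lt t; omega)
    · have hv : t.val = mc - 1 := by have := ZMod.val_lt t; omega
      have h1 : t + 1 = ((t.val + 1 : ℕ) : ZMod mc) := by
        rw [Nat.cast_add, Nat.cast_one, hcast]
      have h2 : (t + 1).val = 0 := by
        rw [h1]
        have : (t.val + 1 : ℕ) = mc := by omega
        rw [this, ZMod.natCast_self, ZMod.val_zero]
      have : A t = {s j, s i} := by
        rw [hA]
        simp only [hg, h2, hv]
        congr 2 <;> omega
      rw [this, Set.pair_comm]
      exact hchord
  have hne1 : ∀ t : ZMod mc, g (t - 1) ≠ g t :=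
    fun t => fun h => hdiff (t - 1) t (Or.inl (by ring)) (hginj h)
  have hne2 : ∀ t : ZMod mc, g t ≠ g (t + 1) :=
    fun t => fun h => hdiff t (t + 1) (Or.inl (by ring)) (hginj h)
  have hne3 : ∀ t : ZMod mc, g (t - 1) ≠ g (t + 1) :=
    fun t => fun h => hdiff (t - 1) (t + 1) (Or.inr (by ring)) (hginj h)
  have hne4 : ∀ t : ZMod mc, g t ≠ g (t + 2) :=
    fun t => fun h => hdiff t (t + 2) (Or.inr (by ring)) (hginj h)
  refine hax.2.2.2.2.2 ⟨mc, A, hmc3, hAmem, ?_⟩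
  intro t
  have e0 : A (t - 1) = {g (t - 1), g t} := hApred t
  have e1 : A t = {g t, g (t + 1)} := rfl
  have e2 : A (t + 1) = {g (t + 1), g (t + 1 + 1)} := rfl
  rw [e0, e1, e2]
  refine ⟨⟨⟨g t, Set.mem_insert_iff.mpr (Or.inr rfl), Set.mem_insert _ _⟩,
      ⟨g (t - 1), Set.mem_insert _ _, ?_⟩,
      ⟨g (t + 1), Set.mem_insert_iff.mpr (Or.inr rfl), ?_⟩⟩, ?_, ?_⟩
  · simp only [Set.mem_insert_iff, Set.mem_singleton_iff]
    push_neg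
    exact ⟨hne1 t, hne3 t⟩
  · simp only [Set.mem_insert_iff, Set.mem_singleton_iff]
    push_neg
    exact ⟨fun h => hne3 t h.symm, fun h => hne2 t h.symm⟩
  · -- triple intersection empty
    ext x
    simp only [Set.mem_inter_iff, Set.mem_insert_iff, Set.mem_singleton_iff,
      Set.mem_empty_iff_false, iff_false]
    rintro ⟨⟨h1 | h1, h2 | h2⟩, h3⟩
    · rw [h1] at h2
      exact hne1 t h2
    · rw [h1] at h2
      exact hne3 t h2
    · rcases h3 with h3 | h3
      · rw [h1] at h3
        exact hne2 t h3
      · rw [h1] at h3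
        have h4 : t + 1 + 1 = t + 2 := by ring
        rw [h4] at h3
        exact hne4 t h3
    · rw [h1] at h2
      exact hne2 t h2
  · -- coverage
    intro x hx
    rcases hx with h | h
    · left
      rw [h]
      exact Set.mem_insert_iff.mpr (Or.inr rfl)
    · right
      rw [Set.mem_singleton_iff.mp h]
      exact Set.mem_insert _ _

end SausageProof
namespace SausageProof

variable {α : Type*} {F : Set α} {𝓕 : Set (Set α)} {k : ℕ} {s : ℕ → α}

lemma bicycle3 {A₀ A₁ A₂ : Set α} (m0 : A₀ ∈ 𝓕) (m1 : A₁ ∈ 𝓕) (m2 : A₂ ∈ 𝓕)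
    (b01 : Bowtie A₀ A₁) (b12 : Bowtie A₁ A₂) (b20 : Bowtie A₂ A₀)
    (tr : A₀ ∩ A₁ ∩ A₂ = ∅) (c0 : A₀ ⊆ A₂ ∪ A₁) (c1 : A₁ ⊆ A₀ ∪ A₂)
    (c2 : A₂ ⊆ A₁ ∪ A₀) : HasBicycleChain 𝓕 := by
  set A : ZMod 3 → Set α := fun i => if i = 0 then A₀ else if i = 1 then A₁ else A₂
    with hAdef
  have hA0 : A 0 = A₀ := by
    rw [hAdef]; simp only []
    first | rfl | exact if_pos trivial | simp
  have hA1 : A 1 = A₁ := by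
    rw [hAdef]; simp only []
    first | rfl | exact if_pos trivial | simp
  have hA2 : A 2 = A₂ := by
    rw [hAdef]; simp only []
    first | rfl | exact if_pos trivial | simp
  have tr' : ∀ B C D : Set α, B ∩ C ∩ D = ∅ → C ∩ D ∩ B = ∅ := by
    intro B C D h
    ext x
    simp only [Set.mem_inter_iff, Set.mem_empty_iff_false, iff_false]
    intro hx
    have : x ∈ B ∩ C ∩ D := ⟨⟨hx.2, hx.1.1⟩, hx.1.2⟩
    rw [h] at this
    exact this
  have h3 : ∀ i : ZMod 3, i = 0 ∨ i = 1 ∨ i = 2 := by decide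
  refine ⟨3, A, le_refl 3, ?_, ?_⟩
  · intro i
    rcases h3 i with rfl | rfl | rfl
    · rwa [hA0]
    · rwa [hA1]
    · rwa [hA2]
  · intro i
    rcases h3 i with rfl | rfl | rfl
    · rw [show (0 : ZMod 3) - 1 = 2 by decide, show (0 : ZMod 3) + 1 = 1 by decide,
        hA0, hA1, hA2]
      exact ⟨b20, tr' A₁ A₂ A₀ (tr' A₀ A₁ A₂ tr), c0⟩
    · rw [show (1 : ZMod 3) - 1 = 0 by decide, show (1 : ZMod 3) + 1 = 2 by decide,
        hA0, hA1, hA2]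
      exact ⟨b01, tr, c1⟩
    · rw [show (2 : ZMod 3) - 1 = 1 by decide, show (2 : ZMod 3) + 1 = 0 by decide,
        hA0, hA1, hA2]
      exact ⟨b12, tr' A₀ A₁ A₂ tr, c2⟩

lemma intv_index (hc : IsChain 𝓕 k s) {i j t : ℕ} (hj : j < k) (ht : t < k)
    (h : s t ∈ Intv s i j) : i ≤ t ∧ t ≤ j := (mem_intv_iff hc hj ht).1 h

lemma intv_intro {i j t : ℕ} (h1 : i ≤ t) (h2 : t ≤ j) : s t ∈ Intv s i j :=
  ⟨t, ⟨h1, h2⟩, rfl⟩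

/-- Members of `𝓕` inside a chain are intervals of the chain. -/
lemma mem_subset_chain_intv (hF : F.Finite) (hax : SatisfiesAxioms F 𝓕)
    (hc : IsChain 𝓕 k s) :
    ∀ n : ℕ, ∀ Y ∈ 𝓕, Y.ncard = n → Y ⊆ CSet k s →
      ∃ i j, i ≤ j ∧ j < k ∧ Y = Intv s i j := by
  intro n
  induction n using Nat.strong_induction_on with
  | _ n ih =>
    intro Y hY hYn hYS
    have hYfin : Y.Finite := mem_finite hF hax hY
    set I : Set ℕ := {t | t < k ∧ s t ∈ Y} with hI
    have hYI : Y = s '' I := by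
      apply Set.Subset.antisymm
      · intro y hy
        obtain ⟨t, ht, rfl⟩ := hYS hy
        exact ⟨t, ⟨ht, hy⟩, rfl⟩
      · rintro y ⟨t, ht, rfl⟩
        exact ht.2
    have hIne : I.Nonempty := by
      obtain ⟨y, hy⟩ := mem_nonempty hax hY
      obtain ⟨t, ht, rfl⟩ := hYS hy
      exact ⟨t, ht, hy⟩
    have hIbdd : BddAbove I := ⟨k, fun t ht => le_of_lt ht.1⟩
    set i := sInf I with hidef
    set l := sSup I with hldef
    have hiI : i ∈ I := Nat.sInf_mem hIne
    have hlI : l ∈ I := Nat.sSup_mem hIne hIbdd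
    have hil : i ≤ l := Nat.sInf_le hlI
    by_cases hconv : ∀ q, i ≤ q → q ≤ l → q ∈ I
    · have hIcc : I = Set.Icc i l :=
        Set.Subset.antisymm (fun t ht => ⟨Nat.sInf_le ht, le_csSup hIbdd ht⟩)
          (fun t ht => hconv t ht.1 ht.2)
      refine ⟨i, l, hil, hlI.1, ?_⟩
      rw [hYI, hIcc]
      rfl
    · push_neg at hconv
      obtain ⟨q, hiq, hql, hqI⟩ := hconv
      have hqk : q < k := lt_of_le_of_lt hql hlI.1
      have hsqY : s q ∉ Y := fun h => hqI ⟨hqk, h⟩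
      have hiq' : i < q := lt_of_le_of_ne hiq (fun h => hqI (h ▸ hiI))
      have hql' : q < l := lt_of_le_of_ne hql (fun h => hqI (h ▸ hlI))
      set T := Intv s 0 q with hT
      have hTmem : T ∈ 𝓕 := intv_mem' hax hc (Nat.zero_le q) hqk
      have hbow : Bowtie Y T := by
        refine ⟨⟨s i, hiI.2, intv_intro (Nat.zero_le i) (le_of_lt hiq')⟩,
          ⟨s l, hlI.2, ?_⟩, ⟨s q, intv_intro (Nat.zero_le q) le_rfl, hsqY⟩⟩
        intro h
        have := (intv_index hc hqk hlI.1 h).2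
        omega
      have hP : Y ∩ T ∈ 𝓕 := inter_mem hax hY hTmem hbow.1
      have hQ : Y \ T ∈ 𝓕 := diff_mem hax hY hTmem hbow
      have hPY : Y ∩ T ⊆ Y := Set.inter_subset_left
      have hQY : Y \ T ⊆ Y := Set.diff_subset
      have hPlt : (Y ∩ T).ncard < n := by
        rw [← hYn]
        apply Set.ncard_lt_ncard _ hYfin
        refine ⟨hPY, fun hcon => ?_⟩
        have := (hcon hlI.2).2
        have := (intv_index hc hqk hlI.1 this).2
        omega
      have hQlt : (Y \ T).ncard < n := by
        rw [← hYn]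
        apply Set.ncard_lt_ncard _ hYfin
        refine ⟨hQY, fun hcon => ?_⟩
        exact (hcon hiI.2).2 (intv_intro (Nat.zero_le i) (le_of_lt hiq'))
      obtain ⟨a, b, hab, hbk, hPI⟩ :=
        ih _ hPlt (Y ∩ T) hP rfl (hPY.trans hYS)
      obtain ⟨c, d, hcd, hdk, hQI⟩ :=
        ih _ hQlt (Y \ T) hQ rfl (hQY.trans hYS)
      -- index facts
      have hsb : s b ∈ Y ∩ T := hPI ▸ intv_intro hab le_rfl
      have hbq : b < q := by
        have h1 := (intv_index hc hqk hbk hsb.2).2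
        rcases eq_or_lt_of_le h1 with h | h
        · exact absurd (h ▸ hsb.1) hsqY
        · exact h
      have hsc : s c ∈ Y \ T := hQI ▸ intv_intro le_rfl hcd
      have hqc : q < c := by
        by_contra hcon
        exact hsc.2 (intv_intro (Nat.zero_le c) (by omega))
      have hYPQ : Y = Intv s a b ∪ Intv s c d := by
        rw [← hPI, ← hQI, Set.inter_union_diff]
      -- the three sets of the bicycle chain
      have hack : c - 1 < k := by omega
      have hbd : b + 1 ≤ d := by omega
      have hb1c : b + 1 ≤ c - 1 := by omega
      have hA0 : Intv s a (c-1) ∈ 𝓕 := intv_mem' hax hc (by omega) hack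
      have hA2 : Intv s (b+1) d ∈ 𝓕 := intv_mem' hax hc hbd hdk
      have hmemY : ∀ t, t < k → (s t ∈ Y ↔ (a ≤ t ∧ t ≤ b) ∨ (c ≤ t ∧ t ≤ d)) := by
        intro t ht
        rw [hYPQ]
        constructor
        · rintro (h | h)
          · exact Or.inl (intv_index hc hbk ht h)
          · exact Or.inr (intv_index hc hdk ht h)
        · rintro (h | h)
          · exact Or.inl (intv_intro h.1 h.2)
          · exact Or.inr (intv_intro h.1 h.2)
      have hsb1Y : s (b+1) ∉ Y := by
        rw [hmemY (b+1) (by omega)]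
        omega
      have b01 : Bowtie (Intv s a (c-1)) Y := by
        refine ⟨⟨s a, intv_intro le_rfl (by omega), (hmemY a (by omega)).mpr (Or.inl ⟨le_rfl, hab⟩)⟩,
          ⟨s (b+1), intv_intro (by omega) hb1c, hsb1Y⟩,
          ⟨s d, (hmemY d hdk).mpr (Or.inr ⟨hcd, le_rfl⟩), fun h => ?_⟩⟩
        have := (intv_index hc hack hdk h).2
        omega
      have b12 : Bowtie Y (Intv s (b+1) d) := by
        refine ⟨⟨s c, (hmemY c (by omega)).mpr (Or.inr ⟨le_rfl, hcd⟩), intv_intro (by omega) hcd⟩,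
          ⟨s a, (hmemY a (by omega)).mpr (Or.inl ⟨le_rfl, hab⟩), fun h => ?_⟩,
          ⟨s (b+1), intv_intro le_rfl hbd, hsb1Y⟩⟩
        have := (intv_index hc hdk (by omega) h).1
        omega
      have b20 : Bowtie (Intv s (b+1) d) (Intv s a (c-1)) := by
        refine ⟨⟨s (b+1), intv_intro le_rfl hbd, intv_intro (by omega) hb1c⟩,
          ⟨s d, intv_intro hbd le_rfl, fun h => ?_⟩,
          ⟨s a, intv_intro le_rfl (by omega), fun h => ?_⟩⟩
        · have := (intv_index hc hack hdk h).2
          omega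
        · have := (intv_index hc hdk (by omega) h).1
          omega
      have tr : Intv s a (c-1) ∩ Y ∩ Intv s (b+1) d = ∅ := by
        ext x
        simp only [Set.mem_inter_iff, Set.mem_empty_iff_false, iff_false]
        rintro ⟨⟨hx0, hx1⟩, hx2⟩
        obtain ⟨t, ht, rfl⟩ := hx0
        have htk : t < k := by
          have := ht.2
          omega
        have h2 := (intv_index hc hdk htk hx2)
        have h3 := ht.1
        have h4 := ht.2
        rcases (hmemY t htk).mp hx1 with h1 | h1 <;> omega
      have c0 : Intv s a (c-1) ⊆ Intv s (b+1) d ∪ Y := by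
        rintro x ⟨t, ht, rfl⟩
        obtain ⟨ht1, ht2⟩ := ht
        have htk : t < k := by omega
        rcases le_or_gt t b with h | h
        · exact Or.inr ((hmemY t htk).mpr (Or.inl ⟨ht1, h⟩))
        · exact Or.inl (intv_intro h (by omega))
      have c1 : Y ⊆ Intv s a (c-1) ∪ Intv s (b+1) d := by
        intro x hx
        obtain ⟨t, htk, rfl⟩ := hYS hx
        rcases (hmemY t htk).mp hx with h | h
        · exact Or.inl (intv_intro h.1 (by omega))
        · exact Or.inr (intv_intro (by omega) h.2)
      have c2 : Intv s (b+1) d ⊆ Y ∪ Intv s a (c-1) := by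
        rintro x ⟨t, ht, rfl⟩
        obtain ⟨ht1, ht2⟩ := ht
        have htk : t < k := by omega
        rcases le_or_gt c t with h | h
        · exact Or.inl ((hmemY t htk).mpr (Or.inr ⟨h, ht2⟩))
        · exact Or.inr (intv_intro (by omega) (by omega))
      exact absurd (bicycle3 hA0 hY hA2 b01 b12 b20 tr c0 c1 c2) hax.2.2.2.2.2

end SausageProof
namespace SausageProof

variable {α : Type*} {F : Set α} {𝓕 : Set (Set α)} {k : ℕ} {s : ℕ → α}

/-- Reversal of a chain. -/
lemma rev_chain (hc : IsChain 𝓕 k s) : IsChain 𝓕 k (fun t => s (k - 1 - t)) := by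
  refine ⟨hc.two_le, ?_, ?_⟩
  · intro t ht t' ht' h
    simp only [Set.mem_Iio] at ht ht'
    have h1 : k - 1 - t < k := by omega
    have h2 : k - 1 - t' < k := by omega
    have := hc.inj h1 h2 h
    omega
  · intro i hi
    have e1 : k - 1 - (i + 1) = k - 2 - i := by omega
    have e2 : (k - 2 - i) + 1 = k - 1 - i := by omega
    have := hc.edge (k - 2 - i) (by omega)
    rw [e2] at this
    simp only [e1]
    rw [Set.pair_comm]
    exact this

lemma rev_cset : CSet k (fun t => s (k - 1 - t)) = CSet k s := by
  apply Set.Subset.antisymm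
  · rintro x ⟨t, ht, rfl⟩
    exact ⟨k - 1 - t, by simp only [Set.mem_Iio] at ht ⊢; omega, rfl⟩
  · rintro x ⟨t, ht, rfl⟩
    simp only [Set.mem_Iio] at ht
    refine ⟨k - 1 - t, by simp only [Set.mem_Iio]; omega, ?_⟩
    show s (k - 1 - (k - 1 - t)) = s t
    congr 1
    omega

lemma rev_good (hg : IsGoodChain 𝓕 k s) :
    IsGoodChain 𝓕 k (fun t => s (k - 1 - t)) := by
  refine ⟨rev_chain hg.1, ?_⟩
  intro x y hx hp hyx
  rw [rev_cset] at hx ⊢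
  exact hg.2 x y hx hp hyx

lemma rev_intv {i j : ℕ} (hij : i ≤ j) (hj : j < k) :
    Intv (fun t => s (k - 1 - t)) i j = Intv s (k - 1 - j) (k - 1 - i) := by
  apply Set.Subset.antisymm
  · rintro x ⟨t, ht, rfl⟩
    simp only [Set.mem_Icc] at ht
    exact ⟨k - 1 - t, by simp only [Set.mem_Icc]; omega, rfl⟩
  · rintro x ⟨t, ht, rfl⟩
    simp only [Set.mem_Icc] at ht
    refine ⟨k - 1 - t, by simp only [Set.mem_Icc]; omega, ?_⟩
    show s (k - 1 - (k - 1 - t)) = s t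
    congr 1
    omega

/-- There is a good (maximal) chain through any pair member. -/
lemma good_chain_through (hF : F.Finite) (hax : SatisfiesAxioms F 𝓕) {a b : α}
    (hab : b ≠ a) (hpair : ({a, b} : Set α) ∈ 𝓕) :
    ∃ k s, IsGoodChain 𝓕 k s ∧ a ∈ CSet k s := by
  set K : Set ℕ := {k | ∃ s : ℕ → α, IsChain 𝓕 k s ∧ a ∈ CSet k s} with hK
  have h2K : 2 ∈ K := by
    refine ⟨fun n => if n = 0 then a else b, ⟨le_rfl, ?_, ?_⟩, 0, by norm_num, by norm_num⟩
    · intro t ht t' ht' h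
      simp only [Set.mem_Iio] at ht ht'
      interval_cases t <;> interval_cases t' <;> simp_all
    · intro i hi
      have : i = 0 := by omega
      subst this
      norm_num
      exact hpair
  have hbdd : BddAbove K := by
    refine ⟨F.ncard, fun k hk => ?_⟩
    obtain ⟨s, hc, _⟩ := hk
    have h1 : CSet k s ⊆ F := mem_subset hax (cset_mem hax hc)
    have := Set.ncard_le_ncard h1 hF
    rwa [cset_ncard hc] at this
  obtain ⟨s, hc, ha⟩ : ∃ s : ℕ → α, IsChain 𝓕 (sSup K) s ∧ a ∈ CSet (sSup K) s :=
    Nat.sSup_mem ⟨2, h2K⟩ hbdd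
  set k₀ := sSup K with hk₀
  refine ⟨k₀, s, ⟨hc, ?_⟩, ha⟩
  intro x y hx hp hyx
  by_contra hy
  obtain ⟨i, hik, rfl⟩ := cset_mem_elim hx
  have hk2 := hc.two_le
  -- y is distinct from everything in the chain
  have hyne : ∀ t, t < k₀ → y ≠ s t := by
    intro t ht heq
    exact hy (heq ▸ mem_cset ht)
  by_cases hi0 : i = 0
  · -- prepend y
    subst hi0
    have hnew : (k₀ + 1) ∈ K := by
      refine ⟨fun n => if n = 0 then y else s (n - 1), ⟨by omega, ?_, ?_⟩, ?_⟩
      · intro t ht t' ht' h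
        simp only [Set.mem_Iio] at ht ht'
        by_cases h1 : t = 0 <;> by_cases h2 : t' = 0 <;> simp [h1, h2] at h ⊢
        · exact absurd h (hyne (t' - 1) (by omega))
        · exact absurd h.symm (hyne (t - 1) (by omega))
        · have := hc.inj (show t - 1 ∈ Set.Iio k₀ by simp only [Set.mem_Iio]; omega)
            (show t' - 1 ∈ Set.Iio k₀ by simp only [Set.mem_Iio]; omega) h
          omega
      · intro m hm
        by_cases h1 : m = 0
        · subst h1
          simp only [if_pos rfl, if_neg (by omega : ¬(0 + 1 = 0))]
          rw [Set.pair_comm]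
          simpa using hp
        · simp only [if_neg h1, if_neg (by omega : ¬(m + 1 = 0))]
          have hed := hc.edge (m - 1) (by omega)
          rw [show m - 1 + 1 = m by omega] at hed
          have e2 : m + 1 - 1 = m := by omega
          rw [e2]
          exact hed
      · obtain ⟨t, ht, rfl⟩ := ha
        simp only [Set.mem_Iio] at ht
        exact ⟨t + 1, by simp only [Set.mem_Iio]; omega, by simp⟩
    have := le_csSup hbdd hnew
    omega
  · by_cases hik1 : i = k₀ - 1
    · -- append y
      subst hik1
      have hnew : (k₀ + 1) ∈ K := by
        refine ⟨fun n => if n = k₀ then y else s n, ⟨by omega, ?_, ?_⟩, ?_⟩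
        · intro t ht t' ht' h
          simp only [Set.mem_Iio] at ht ht'
          by_cases h1 : t = k₀ <;> by_cases h2 : t' = k₀ <;> simp [h1, h2] at h ⊢
          · exact absurd h (hyne t' (by omega))
          · exact absurd h.symm (hyne t (by omega))
          · exact hc.inj (by simp only [Set.mem_Iio]; omega)
              (by simp only [Set.mem_Iio]; omega) h
        · intro m hm
          by_cases h1 : m + 1 = k₀
          · have h2 : m ≠ k₀ := by omega
            simp only [if_neg h2, if_pos h1]
            have e : m = k₀ - 1 := by omega
            rw [e]
            exact hp
          · have h2 : m ≠ k₀ := by omega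
            simp only [if_neg h2, if_neg h1]
            exact hc.edge m (by omega)
        · obtain ⟨t, ht, rfl⟩ := ha
          simp only [Set.mem_Iio] at ht
          exact ⟨t, by simp only [Set.mem_Iio]; omega, by simp [show t ≠ k₀ by omega]⟩
      have := le_csSup hbdd hnew
      omega
    · -- middle: three neighbours of s i
      have hedge1 : ({s i, s (i - 1)} : Set α) ∈ 𝓕 := by
        rw [Set.pair_comm]
        have := hc.edge (i - 1) (by omega)
        have e : i - 1 + 1 = i := by omega
        rwa [e] at this
      have hedge2 : ({s i, s (i + 1)} : Set α) ∈ 𝓕 := hc.edge i (by omega)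
      exact degree_le_two hax hedge1 hedge2 hp
        (fun h => by have := hc.inj (by simp only [Set.mem_Iio]; omega : i - 1 ∈ Set.Iio k₀)
                       (by simp only [Set.mem_Iio]; omega : i ∈ Set.Iio k₀) h; omega)
        (fun h => by have := hc.inj (by simp only [Set.mem_Iio]; omega : i + 1 ∈ Set.Iio k₀)
                       (by simp only [Set.mem_Iio]; omega : i ∈ Set.Iio k₀) h; omega)
        hyx
        (fun h => by have := hc.inj (by simp only [Set.mem_Iio]; omega : i - 1 ∈ Set.Iio k₀)
                       (by simp only [Set.mem_Iio]; omega : i + 1 ∈ Set.Iio k₀) h; omega)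
        (fun h => (hyne (i - 1) (by omega) h.symm))
        (fun h => (hyne (i + 1) (by omega) h.symm))

/-- A chain meeting the carrier of a good chain is contained in it. -/
lemma chain_sub_good {k' : ℕ} {s' : ℕ → α} (hg : IsGoodChain 𝓕 k' s')
    (hc : IsChain 𝓕 k s) {p : ℕ} (hp : p < k) (hmem : s p ∈ CSet k' s') :
    ∀ q, q < k → s q ∈ CSet k' s' := by
  have hup : ∀ d, p + d < k → s (p + d) ∈ CSet k' s' := by
    intro d
    induction d with
    | zero => intro _; simpa using hmem
    | succ d ihd =>
      intro hd
      have hx : s (p + d) ∈ CSet k' s' := ihd (by omega)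
      have hedge : ({s (p + d), s (p + d + 1)} : Set α) ∈ 𝓕 := hc.edge (p + d) (by omega)
      have hne : s (p + d + 1) ≠ s (p + d) := by
        intro h
        have := hc.inj (by simp only [Set.mem_Iio]; omega : p + d + 1 ∈ Set.Iio k)
          (by simp only [Set.mem_Iio]; omega : p + d ∈ Set.Iio k) h
        omega
      have := hg.2 _ _ hx hedge hne
      simpa [Nat.add_assoc] using this
  have hdown : ∀ d, d ≤ p → s (p - d) ∈ CSet k' s' := by
    intro d
    induction d with
    | zero => intro _; simpa using hmem
    | succ d ihd =>
      intro hd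
      have hx : s (p - d) ∈ CSet k' s' := ihd (by omega)
      have hedge : ({s (p - d - 1), s (p - d - 1 + 1)} : Set α) ∈ 𝓕 :=
        hc.edge (p - d - 1) (by omega)
      have e : p - d - 1 + 1 = p - d := by omega
      rw [e, Set.pair_comm] at hedge
      have hne : s (p - d - 1) ≠ s (p - d) := by
        intro h
        have := hc.inj (by simp only [Set.mem_Iio]; omega : p - d - 1 ∈ Set.Iio k)
          (by simp only [Set.mem_Iio]; omega : p - d ∈ Set.Iio k) h
        omega
      have := hg.2 _ _ hx hedge hne
      have e2 : p - (d + 1) = p - d - 1 := by omega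
      rwa [e2]
  intro q hq
  rcases le_or_gt p q with h | h
  · have := hup (q - p) (by omega)
    have e : p + (q - p) = q := by omega
    rwa [e] at this
  · have := hdown (p - q) (by omega)
    have e : p - (p - q) = q := by omega
    rwa [e] at this

/-- Two good chains with intersecting carriers have equal carriers. -/
lemma good_cset_eq {k' : ℕ} {s' : ℕ → α} (hg : IsGoodChain 𝓕 k s)
    (hg' : IsGoodChain 𝓕 k' s') (hne : (CSet k s ∩ CSet k' s').Nonempty) :
    CSet k s = CSet k' s' := by
  obtain ⟨z, hz, hz'⟩ := hne
  obtain ⟨p, hp, rfl⟩ := cset_mem_elim hz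
  apply Set.Subset.antisymm
  · rintro x ⟨q, hq, rfl⟩
    exact chain_sub_good hg' hg.1 hp hz' q hq
  · obtain ⟨p', hp', hzeq⟩ := cset_mem_elim hz'
    rintro x ⟨q, hq, rfl⟩
    exact chain_sub_good hg hg'.1 hp' (hzeq ▸ mem_cset hp) q hq

end SausageProof
namespace SausageProof

variable {α : Type*} {F : Set α} {𝓕 : Set (Set α)} {k : ℕ} {s : ℕ → α}

/-- A crossing of a good chain of a given size exists. -/
def CrossSize (𝓕 : Set (Set α)) (m : ℕ) : Prop :=
  ∃ (k : ℕ) (s : ℕ → α) (X : Set α), IsGoodChain 𝓕 k s ∧ X ∈ 𝓕 ∧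
    Bowtie X (CSet k s) ∧ X.ncard = m

lemma cross_prefix_aux (hF : F.Finite) (hax : SatisfiesAxioms F 𝓕) {X : Set α}
    (hg : IsGoodChain 𝓕 k s) (hX : X ∈ 𝓕) (hbow : Bowtie X (CSet k s))
    (hmin : ∀ m, CrossSize 𝓕 m → X.ncard ≤ m) {j : ℕ}
    (hXS : X ∩ CSet k s = Intv s 0 j) (hjk : j + 1 < k) : j = 0 := by
  by_contra hj0
  have hj1 : 1 ≤ j := by omega
  have hc := hg.1
  set T : Set α := {s j, s (j + 1)} with hT
  have hTmem : T ∈ 𝓕 := hc.edge j hjk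
  have hsjX : s j ∈ X := by
    have : s j ∈ Intv s 0 j := intv_intro (Nat.zero_le j) le_rfl
    rw [← hXS] at this
    exact this.1
  have hs0X : s 0 ∈ X := by
    have : s 0 ∈ Intv s 0 j := intv_intro le_rfl (Nat.zero_le j)
    rw [← hXS] at this
    exact this.1
  have hsj1X : s (j + 1) ∉ X := by
    intro h
    have : s (j + 1) ∈ Intv s 0 j := by
      rw [← hXS]
      exact ⟨h, mem_cset (by omega)⟩
    have := (intv_index hc (by omega) (by omega) this).2
    omega
  have hs0T : s 0 ∉ T := by
    intro h
    rcases h with h | h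
    · have := hc.inj (by simp only [Set.mem_Iio]; omega : 0 ∈ Set.Iio k)
        (by simp only [Set.mem_Iio]; omega : j ∈ Set.Iio k) h
      omega
    · have := hc.inj (by simp only [Set.mem_Iio]; omega : 0 ∈ Set.Iio k)
        (by simp only [Set.mem_Iio]; omega : j + 1 ∈ Set.Iio k)
        (Set.mem_singleton_iff.mp h)
      omega
  have hbowXT : Bowtie X T := by
    refine ⟨⟨s j, hsjX, Set.mem_insert _ _⟩, ⟨s 0, hs0X, hs0T⟩,
      ⟨s (j + 1), Set.mem_insert_iff.mpr (Or.inr rfl), hsj1X⟩⟩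
  have hX' : X \ T ∈ 𝓕 := diff_mem hax hX hTmem hbowXT
  have hbow' : Bowtie (X \ T) (CSet k s) := by
    obtain ⟨xout, hxout⟩ := hbow.2.1
    obtain ⟨zout, hzout⟩ := hbow.2.2
    refine ⟨⟨s 0, ⟨hs0X, hs0T⟩, mem_cset (by omega)⟩,
      ⟨xout, ⟨hxout.1, fun h => hxout.2 ?_⟩, hxout.2⟩,
      ⟨zout, hzout.1, fun h => hzout.2 h.1⟩⟩
    rcases h with h | h
    · exact h ▸ mem_cset (by omega)
    · exact (Set.mem_singleton_iff.mp h) ▸ mem_cset (by omega)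
  have hlt : (X \ T).ncard < X.ncard := by
    apply Set.ncard_lt_ncard _ (mem_finite hF hax hX)
    exact ⟨Set.diff_subset, fun hcon => (hcon hsjX).2 (Set.mem_insert _ _)⟩
  have := hmin (X \ T).ncard ⟨k, s, X \ T, hg, hX', hbow', rfl⟩
  omega

lemma cross_min_inter (hF : F.Finite) (hax : SatisfiesAxioms F 𝓕) {X : Set α}
    (hg : IsGoodChain 𝓕 k s) (hX : X ∈ 𝓕) (hbow : Bowtie X (CSet k s))
    (hmin : ∀ m, CrossSize 𝓕 m → X.ncard ≤ m) :
    ∃ e, X ∩ CSet k s = {e} := by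
  have hc := hg.1
  have hk2 := hc.two_le
  have hSmem : CSet k s ∈ 𝓕 := cset_mem hax hc
  have hA : X ∩ CSet k s ∈ 𝓕 := inter_mem hax hX hSmem hbow.1
  obtain ⟨i, j, hij, hjk, hAI⟩ := mem_subset_chain_intv hF hax hc
    (X ∩ CSet k s).ncard _ hA rfl Set.inter_subset_right
  -- X ∩ S is not all of S
  have hnotall : ¬(i = 0 ∧ j = k - 1) := by
    rintro ⟨rfl, rfl⟩
    obtain ⟨z, hz1, hz2⟩ := hbow.2.2
    exact hz2 (by
      rw [cset_eq_intv (by omega), ← hAI] at hz1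
      exact hz1.1)
  -- not both-sided gaps
  have hedge : ¬(0 < i ∧ j < k - 1) := by
    rintro ⟨hi0, hjk1⟩
    have hZ1 : Intv s (i - 1) j ∈ 𝓕 := intv_mem' hax hc (by omega) hjk
    have hZ2 : Intv s i (j + 1) ∈ 𝓕 := intv_mem' hax hc (by omega) (by omega)
    have hAX : X ∩ CSet k s ≠ X := by
      intro h
      obtain ⟨x, hx1, hx2⟩ := hbow.2.1
      exact hx2 (h.symm ▸ hx1 : x ∈ X ∩ CSet k s).2
    obtain ⟨Z, hZmin, hZX⟩ := min_superset_exists hF hax hA hX Set.inter_subset_left hAX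
    -- auxiliary: intervals between A and Z1/Z2 are A or the superset
    have hminsup : ∀ (p q : ℕ), p ≤ i → j ≤ q → q < k → i - p + (q - j) = 1 →
        IsProperMinimalSuperset 𝓕 (X ∩ CSet k s) (Intv s p q) := by
      intro p q hpi hjq hqk hpq1
      have hpq : p ≤ q := by omega
      have hsub : X ∩ CSet k s ⊆ Intv s p q := by
        rw [hAI]
        rintro x ⟨t, ht, rfl⟩
        obtain ⟨ht1, ht2⟩ := ht
        exact intv_intro (by omega) (by omega)
      refine ⟨intv_mem' hax hc hpq hqk, hsub, ?_, ?_⟩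
      · intro h
        rw [hAI] at h
        have hp1 : s p ∈ Intv s i j := h ▸ intv_intro le_rfl hpq
        have hq1 : s q ∈ Intv s i j := h ▸ intv_intro hpq le_rfl
        have hp2 := intv_index hc hjk (by omega) hp1
        have hq2 := intv_index hc hjk (by omega) hq1
        omega
      · intro Y hY h1 h2
        obtain ⟨p', q', hpq', hqk', hYI⟩ := mem_subset_chain_intv hF hax hc
          Y.ncard _ hY rfl (h2.trans (intv_subset_cset hqk))
        rw [hAI] at h1
        have hi' : s i ∈ Y := h1 (intv_intro le_rfl hij)
        have hj' : s j ∈ Y := h1 (intv_intro hij le_rfl)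
        have hii := intv_index hc hqk' (by omega) (hYI ▸ hi')
        have hjj := intv_index hc hqk' (by omega) (hYI ▸ hj')
        have hp'' : s p' ∈ Intv s p q := h2 (hYI ▸ intv_intro le_rfl hpq')
        have hq'' : s q' ∈ Intv s p q := h2 (hYI ▸ intv_intro hpq' le_rfl)
        have hp3 := intv_index hc hqk (by omega) hp''
        have hq3 := intv_index hc hqk (by omega) hq''
        -- p' ∈ [p, i], q' ∈ [j, q]
        by_cases hYA : p' = i ∧ q' = j
        · left
          rw [hYI, hAI, hYA.1, hYA.2]
        · right
          rw [hYI]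
          rcases not_and_or.mp hYA with hd | hd
          · have : p' = p ∧ q' = q := by omega
            rw [this.1, this.2]
          · have : p' = p ∧ q' = q := by omega
            rw [this.1, this.2]
    have h1 : IsProperMinimalSuperset 𝓕 (X ∩ CSet k s) (Intv s (i-1) j) :=
      hminsup (i-1) j (by omega) (by omega) hjk (by omega)
    have h2 : IsProperMinimalSuperset 𝓕 (X ∩ CSet k s) (Intv s i (j+1)) :=
      hminsup i (j+1) (by omega) (by omega) (by omega) (by omega)
    have hsi1 : s (i-1) ∉ X := by
      intro h
      have : s (i-1) ∈ Intv s i j := hAI ▸ (⟨h, mem_cset (by omega)⟩ : s (i-1) ∈ X ∩ CSet k s)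
      have := intv_index hc hjk (by omega) this
      omega
    have hsj1 : s (j+1) ∉ X := by
      intro h
      have : s (j+1) ∈ Intv s i j := hAI ▸ (⟨h, mem_cset (by omega)⟩ : s (j+1) ∈ X ∩ CSet k s)
      have := intv_index hc hjk (by omega) this
      omega
    have hne12 : Intv s (i-1) j ≠ Intv s i (j+1) := by
      intro h
      have : s (i-1) ∈ Intv s i (j+1) := h ▸ intv_intro le_rfl (by omega)
      have := intv_index hc (by omega) (by omega) this
      omega
    have hne1Z : Intv s (i-1) j ≠ Z := by
      intro h
      exact hsi1 (hZX (h ▸ intv_intro le_rfl (by omega)))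
    have hne2Z : Intv s i (j+1) ≠ Z := by
      intro h
      exact hsj1 (hZX (h ▸ intv_intro (by omega) le_rfl))
    exact three_min_supersets_absurd hax hA h1 h2 hZmin hne12 hne1Z hne2Z
  -- now i = 0 or j = k - 1
  rcases Nat.eq_zero_or_pos i with hi0 | hi0
  · subst hi0
    have hjk1 : j + 1 < k := by
      rcases Nat.lt_or_ge (j+1) k with h | h
      · exact h
      · exact absurd ⟨rfl, by omega⟩ hnotall
    have := cross_prefix_aux hF hax hg hX hbow hmin hAI hjk1
    subst this
    refine ⟨s 0, ?_⟩
    rw [hAI]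
    unfold Intv
    rw [Set.Icc_self, Set.image_singleton]
  · -- use the reversed chain
    have hjk1 : j = k - 1 := by
      by_contra h
      exact hedge ⟨hi0, by omega⟩
    subst hjk1
    set r : ℕ → α := fun t => s (k - 1 - t) with hr
    have hgr : IsGoodChain 𝓕 k r := rev_good hg
    have hbowr : Bowtie X (CSet k r) := by rwa [hr, rev_cset]
    have hAIr : X ∩ CSet k r = Intv r 0 (k - 1 - i) := by
      rw [hr, rev_cset, rev_intv (by omega) (by omega)]
      have e1 : k - 1 - (k - 1 - i) = i := by omega
      have e2 : k - 1 - 0 = k - 1 := by omega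
      rw [e1, e2]
      exact hAI
    have := cross_prefix_aux hF hax hgr hX hbowr hmin hAIr (by omega)
    refine ⟨s (k - 1), ?_⟩
    have : X ∩ CSet k r = {r 0} := by
      rw [hAIr, this]
      unfold Intv
      rw [Set.Icc_self, Set.image_singleton]
    rw [hr, rev_cset] at this
    rw [this]
    show {s (k - 1 - 0)} = {s (k - 1)}
    rw [Nat.sub_zero]

end SausageProof
namespace SausageProof

variable {α : Type*} {F : Set α} {𝓕 : Set (Set α)}

/-- No member of `𝓕` crosses any good chain. -/
lemma no_cross (hF : F.Finite) (hax : SatisfiesAxioms F 𝓕)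
    (hirr : IrreducibleFamily F 𝓕) :
    ∀ (k : ℕ) (s : ℕ → α) (X : Set α), IsGoodChain 𝓕 k s → X ∈ 𝓕 →
      ¬Bowtie X (CSet k s) := by
  by_contra hcon
  push_neg at hcon
  obtain ⟨k', s', X', hg', hX', hbow'⟩ := hcon
  have hMne : ∃ m, CrossSize 𝓕 m := ⟨X'.ncard, k', s', X', hg', hX', hbow', rfl⟩
  set M : Set ℕ := {m | CrossSize 𝓕 m} with hM
  obtain ⟨k, s, X, hg, hX, hbow, hXcard⟩ := Nat.sInf_mem hMne
  have hmin : ∀ m, CrossSize 𝓕 m → X.ncard ≤ m := by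
    intro m hm
    rw [hXcard]
    exact Nat.sInf_le hm
  have hc := hg.1
  have hk2 := hc.two_le
  have hXfin := mem_finite hF hax hX
  obtain ⟨e, hXe⟩ := cross_min_inter hF hax hg hX hbow hmin
  have heX : e ∈ X ∧ e ∈ CSet k s := by
    have : e ∈ X ∩ CSet k s := hXe ▸ rfl
    exact ⟨this.1, this.2⟩
  set B : Set α := X \ CSet k s with hB
  have hBmem : B ∈ 𝓕 := diff_mem hax hX (cset_mem hax hc) hbow
  have hBne : B.Nonempty := hbow.2.1
  have hXeB : X = insert e B := by
    apply Set.Subset.antisymm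
    · intro x hx
      by_cases hxS : x ∈ CSet k s
      · have : x ∈ ({e} : Set α) := hXe ▸ (⟨hx, hxS⟩ : x ∈ X ∩ CSet k s)
        exact Or.inl this
      · exact Or.inr ⟨hx, hxS⟩
    · intro x hx
      rcases hx with rfl | hx
      · exact heX.1
      · exact hx.1
  have heB : e ∉ B := fun h => h.2 heX.2
  have hBF : B ⊆ F := mem_subset hax hBmem
  have hBlt : B.ncard < F.ncard := by
    apply Set.ncard_lt_ncard _ hF
    refine ⟨hBF, fun hcon2 => ?_⟩
    exact heB (hcon2 (mem_subset hax (cset_mem hax hc) heX.2))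
  rcases Set.eq_singleton_or_nontrivial (hBne.choose_spec) with hBsing | hBnt
  · -- |B| = 1 : X is a pair crossing the chain, contradicting goodness
    set b := hBne.choose with hb
    have hbB : b ∈ B := hBne.choose_spec
    have hXpair : X = {e, b} := by
      rw [hXeB, hBsing]
    have hbne : b ≠ e := fun h => heB (h ▸ hbB)
    have : b ∈ CSet k s := hg.2 e b heX.2 (hXpair ▸ hX) hbne
    exact hbB.2 this
  · -- |B| ≥ 2 : find a pair inside B and a good chain through it
    have hB2 : 2 ≤ B.ncard := by
      obtain ⟨x, hx, y, hy, hxy⟩ := hBnt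
      exact (Set.one_lt_ncard (hF.subset hBF)).mpr ⟨x, hx, y, hy, hxy⟩
    obtain ⟨b, b', hbb', hpsub, hpmem⟩ :=
      pair_exists hF hax hirr B.ncard B hBmem rfl hB2 hBlt
    obtain ⟨k₂, s₂, hg₂, hbS₂⟩ := good_chain_through hF hax hbb'.symm hpmem
    have hbB : b ∈ B := hpsub (Set.mem_insert _ _)
    have hb'B : b' ∈ B := hpsub (Set.mem_insert_iff.mpr (Or.inr rfl))
    have hb'S₂ : b' ∈ CSet k₂ s₂ := hg₂.2 b b' hbS₂ hpmem hbb'.symm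
    have hdisj : ∀ z, z ∈ CSet k₂ s₂ → z ∉ CSet k s := by
      intro z hz1 hz2
      have := good_cset_eq hg₂ hg ⟨z, hz1, hz2⟩
      exact hbB.2 (this ▸ hbS₂)
    have heS₂ : e ∉ CSet k₂ s₂ := fun h => hdisj e h heX.2
    by_cases hS2X : CSet k₂ s₂ ⊆ X
    · -- Case B : the carrier of the second chain is inside X
      have hS₂mem : CSet k₂ s₂ ∈ 𝓕 := cset_mem hax hg₂.1
      have hS₂F : CSet k₂ s₂ ⊆ F := mem_subset hax hS₂mem
      have hS₂B : CSet k₂ s₂ ⊆ B := by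
        intro z hz
        exact ⟨hS2X hz, fun h => hdisj z hz h⟩
      have hS₂card : 1 < (CSet k₂ s₂).ncard := by
        rw [cset_ncard hg₂.1]
        have := hg₂.1.two_le
        omega
      have hS₂lt : (CSet k₂ s₂).ncard < F.ncard :=
        lt_of_le_of_lt (Set.ncard_le_ncard hS₂B (hF.subset hBF)) hBlt
      obtain ⟨W, hW, hbowW⟩ := cross_exists hax hirr hS₂mem hS₂card hS₂lt
      have hWX : X.ncard ≤ W.ncard := hmin W.ncard ⟨k₂, s₂, W, hg₂, hW, hbowW, rfl⟩
      obtain ⟨w, hwW, hwS₂⟩ := hbowW.1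
      obtain ⟨v, hvS₂, hvW⟩ := hbowW.2.2
      have hWXne : (W \ X).Nonempty := by
        rcases (W \ X).eq_empty_or_nonempty with hemp | hne
        · exfalso
          have hWsub : W ⊆ X := Set.diff_eq_empty.mp hemp
          have : W = X := Set.eq_of_subset_of_ncard_le hWsub hWX hXfin
          exact hvW (this ▸ (hS2X hvS₂))
        · exact hne
      have hbowXW : Bowtie X W := by
        refine ⟨⟨w, ?_⟩, ⟨v, ?_⟩, hWXne⟩
        · exact ⟨hS2X hwS₂, hwW⟩
        · exact ⟨hS2X hvS₂, hvW⟩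
      have hP : X ∩ W ∈ 𝓕 := inter_mem hax hX hW hbowXW.1
      have hQ : X \ W ∈ 𝓕 := diff_mem hax hX hW hbowXW
      have hPlt : (X ∩ W).ncard < X.ncard := by
        apply Set.ncard_lt_ncard _ hXfin
        exact ⟨Set.inter_subset_left, fun h => hvW (h (hS2X hvS₂)).2⟩
      have hQlt : (X \ W).ncard < X.ncard := by
        apply Set.ncard_lt_ncard _ hXfin
        exact ⟨Set.diff_subset, fun h => (h (hS2X hwS₂)).2 hwW⟩
      have hPnb : ¬Bowtie (X ∩ W) (CSet k₂ s₂) := by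
        intro hb2
        have := hmin _ ⟨k₂, s₂, X ∩ W, hg₂, hP, hb2, rfl⟩
        omega
      have hQnb : ¬Bowtie (X \ W) (CSet k₂ s₂) := by
        intro hb2
        have := hmin _ ⟨k₂, s₂, X \ W, hg₂, hQ, hb2, rfl⟩
        omega
      have hPsub : X ∩ W ⊆ CSet k₂ s₂ := by
        by_contra hcon2
        apply hPnb
        refine ⟨⟨w, ⟨hS2X hwS₂, hwW⟩, hwS₂⟩, ?_, ⟨v, hvS₂, fun h => hvW h.2⟩⟩
        obtain ⟨z, hz⟩ := Set.not_subset.mp hcon2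
        exact ⟨z, hz.1, hz.2⟩
      have hQsub : X \ W ⊆ CSet k₂ s₂ := by
        by_contra hcon2
        apply hQnb
        refine ⟨⟨v, ⟨hS2X hvS₂, hvW⟩, hvS₂⟩, ?_, ⟨w, hwS₂, fun h => h.2 hwW⟩⟩
        obtain ⟨z, hz⟩ := Set.not_subset.mp hcon2
        exact ⟨z, hz.1, hz.2⟩
      have : e ∈ CSet k₂ s₂ := by
        by_cases heW : e ∈ W
        · exact hPsub ⟨heX.1, heW⟩
        · exact hQsub ⟨heX.1, heW⟩
      exact heS₂ this
    · -- Case A : X also crosses the second chain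
      have hbow₂ : Bowtie X (CSet k₂ s₂) := by
        refine ⟨⟨b, hbB.1, hbS₂⟩, ⟨e, heX.1, heS₂⟩, ?_⟩
        obtain ⟨z, hz⟩ := Set.not_subset.mp hS2X
        exact ⟨z, hz.1, hz.2⟩
      obtain ⟨e₂, hXe₂⟩ := cross_min_inter hF hax hg₂ hX hbow₂ hmin
      have h1 : b ∈ ({e₂} : Set α) := hXe₂ ▸ (⟨hbB.1, hbS₂⟩ : b ∈ X ∩ CSet k₂ s₂)
      have h2 : b' ∈ ({e₂} : Set α) := hXe₂ ▸ (⟨hb'B.1, hb'S₂⟩ : b' ∈ X ∩ CSet k₂ s₂)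
      exact hbb' (h1.trans h2.symm)

end SausageProof
namespace SausageProof

variable {α : Type*}

lemma main (F : Set α) (hF : F.Finite) (𝓕 : Set (Set α))
    (hax : SatisfiesAxioms F 𝓕) (hirr : IrreducibleFamily F 𝓕) :
    IsStringOfSausages F 𝓕 ∨ IsFatSausage F 𝓕 := by
  by_cases hfat : ∀ X ∈ 𝓕, X.ncard ≤ 1 ∨ X = F
  · right
    unfold IsFatSausage
    apply Set.Subset.antisymm
    · intro X hX
      rcases hfat X hX with h1 | rfl
      · right
        have hXne := mem_nonempty hax hX
        have hXfin := mem_finite hF hax hX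
        have h2 : X.ncard = 1 := by
          have := (Set.ncard_pos hXfin).mpr hXne
          omega
        obtain ⟨x, rfl⟩ := Set.ncard_eq_one.mp h2
        exact ⟨x, mem_subset hax hX rfl, rfl⟩
      · exact Or.inl rfl
    · rintro X (rfl | ⟨x, hxF, rfl⟩)
      · exact hax.2.1.2.2
      · exact hax.2.1.1 x hxF
  · left
    push_neg at hfat
    obtain ⟨E, hE, hE1, hEF⟩ := hfat
    have hE2 : 2 ≤ E.ncard := by omega
    have hElt : E.ncard < F.ncard :=
      Set.ncard_lt_ncard (ssubset_of_subset_of_ne (mem_subset hax hE) hEF) hF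
    obtain ⟨a, b, hab, _, hpair⟩ :=
      pair_exists hF hax hirr E.ncard E hE rfl hE2 hElt
    obtain ⟨k, s, hg, haS⟩ := good_chain_through hF hax hab.symm hpair
    have hc := hg.1
    have hk2 := hc.two_le
    have hSmem : CSet k s ∈ 𝓕 := cset_mem hax hc
    have hSF : CSet k s ⊆ F := mem_subset hax hSmem
    have hSeqF : CSet k s = F := by
      rcases eq_or_lt_of_le (Set.ncard_le_ncard hSF hF) with h | h
      · exact Set.eq_of_subset_of_ncard_le hSF (le_of_eq h.symm) hF
      · exfalso
        obtain ⟨X, hX, hbow⟩ := cross_exists hax hirr hSmem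
          (by rw [cset_ncard hc]; omega) h
        exact no_cross hF hax hirr k s X hg hX hbow
    refine ⟨k, fun i : Fin k => s i.val, ?_, ?_, ?_⟩
    · intro i j h
      exact Fin.ext (hc.inj (by simpa using i.isLt) (by simpa using j.isLt) h)
    · rw [← hSeqF]
      apply Set.Subset.antisymm
      · rintro x ⟨i, rfl⟩
        exact mem_cset i.isLt
      · rintro x ⟨t, ht, rfl⟩
        simp only [Set.mem_Iio] at ht
        exact ⟨⟨t, ht⟩, rfl⟩
    · have himg : ∀ i j : Fin k, (fun i : Fin k => s i.val) '' Set.Icc i j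
          = Intv s i.val j.val := by
        intro i j
        apply Set.Subset.antisymm
        · rintro x ⟨t, ht, rfl⟩
          simp only [Set.mem_Icc] at ht
          exact intv_intro (Fin.le_def.mp ht.1) (Fin.le_def.mp ht.2)
        · rintro x ⟨t, ht, rfl⟩
          simp only [Set.mem_Icc] at ht
          refine ⟨⟨t, lt_of_le_of_lt ht.2 j.isLt⟩, ?_, rfl⟩
          simp only [Set.mem_Icc]
          exact ⟨Fin.le_def.mpr ht.1, Fin.le_def.mpr ht.2⟩
      apply Set.Subset.antisymm
      · intro X hX
        obtain ⟨i, j, hij, hjk, hXI⟩ := mem_subset_chain_intv hF hax hc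
          X.ncard X hX rfl (by rw [hSeqF]; exact mem_subset hax hX)
        refine ⟨⟨i, by omega⟩, ⟨j, hjk⟩, Fin.le_def.mpr hij, ?_⟩
        rw [himg]
        exact hXI
      · rintro X ⟨i, j, hij, rfl⟩
        rw [himg]
        exact intv_mem' hax hc (Fin.le_def.mp hij) j.isLt

end SausageProof

theorem irreducible_family_string_or_fat (F : Set α) (hF : F.Finite)
    (𝓕 : Set (Set α)) (hax : SatisfiesAxioms F 𝓕)
    (hirr : IrreducibleFamily F 𝓕) :
    IsStringOfSausages F 𝓕 ∨ IsFatSausage F 𝓕 :=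
  SausageProof.main F hF 𝓕 hax hirr
end

section
/- Let 𝒞 and 𝒟 be two clone structures over disjoint finite sets C and D, respectively. Then for each c ∈ C, the family of subsets 𝒞(c → 𝒟), regarded as a family of subsets of (C \ {c}) ∪ D, is a clone structure, i.e., there exists a preference profile R' over (C \ {c}) ∪ D whose family of clone sets equals 𝒞(c → 𝒟). -/
variable {α : Type*}

/-- `𝓒` is a clone structure over `C`. -/
def IsCloneStructure (C : Set α) (𝓒 : Set (Set α)) : Prop :=
  ∃ (n : ℕ) (R : Fin n → α → α → Prop), IsProfile C R ∧ 𝓒 = cloneSets C R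

/-! ### Auxiliary machinery for the embedding construction -/

open Classical in
/-- Project an element of `(C \ {c}) ∪ D` to `C` by collapsing `D` to `c`. -/
noncomputable def embProj (D : Set α) (c : α) (x : α) : α :=
  if x ∈ D then c else x

/-- The combined relation: within `D` use `s`, otherwise use `r` after collapsing `D` to `c`. -/
def embRel (D : Set α) (c : α) (r s : α → α → Prop) (x y : α) : Prop :=
  (x ∈ D ∧ y ∈ D ∧ s x y) ∨ ((x ∉ D ∨ y ∉ D) ∧ r (embProj D c x) (embProj D c y))

lemma embProj_mem {D : Set α} {c x : α} (h : x ∈ D) : embProj D c x = c := if_pos h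

lemma embProj_not_mem {D : Set α} {c x : α} (h : x ∉ D) : embProj D c x = x := if_neg h

lemma embRel_DD {D : Set α} {c : α} {r s : α → α → Prop} {x y : α}
    (hx : x ∈ D) (hy : y ∈ D) : embRel D c r s x y ↔ s x y := by
  constructor
  · rintro (⟨_, _, h⟩ | ⟨h, _⟩)
    · exact h
    · rcases h with h | h
      · exact absurd hx h
      · exact absurd hy h
  · exact fun h => Or.inl ⟨hx, hy, h⟩

lemma embRel_nDD {D : Set α} {c : α} {r s : α → α → Prop} {x y : α}
    (h : x ∉ D ∨ y ∉ D) :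
    embRel D c r s x y ↔ r (embProj D c x) (embProj D c y) := by
  constructor
  · rintro (⟨hx, hy, _⟩ | ⟨_, h'⟩)
    · rcases h with h' | h'
      · exact absurd hx h'
      · exact absurd hy h'
    · exact h'
  · exact fun h' => Or.inr ⟨h, h'⟩

lemma linOn_asym {C : Set α} {r : α → α → Prop} (h : IsLinOn C r) {a b : α}
    (ha : a ∈ C) (hb : b ∈ C) (hab : r a b) : ¬ r b a :=
  fun h' => h.1 a ha (h.2.1 a ha b hb a ha hab h')

lemma linOn_not_iff {C : Set α} {r : α → α → Prop} (h : IsLinOn C r) {a b : α}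
    (ha : a ∈ C) (hb : b ∈ C) (hne : a ≠ b) : r a b ↔ ¬ r b a :=
  ⟨linOn_asym h ha hb, fun h' => (h.2.2 a ha b hb hne).resolve_right h'⟩

lemma linOn_rev {D : Set α} {s : α → α → Prop} (h : IsLinOn D s) :
    IsLinOn D (fun x y => s y x) :=
  ⟨h.1, fun a ha b hb x hx h1 h2 => h.2.1 x hx b hb a ha h2 h1,
   fun a ha b hb hne => (h.2.2 a ha b hb hne).symm⟩

/-- A voter from the `D`-profile, possibly reversed. -/
def S2fam {m : ℕ} (S : Fin m → α → α → Prop) (j : Fin m) (b : Bool) : α → α → Prop :=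
  match b with
  | false => S j
  | true => fun x y => S j y x

lemma S2fam_false {m : ℕ} (S : Fin m → α → α → Prop) (j : Fin m) :
    S2fam S j false = S j := rfl

lemma S2fam_true {m : ℕ} (S : Fin m → α → α → Prop) (j : Fin m) :
    S2fam S j true = fun x y => S j y x := rfl

/-- The combined profile over `(C \ {c}) ∪ D`. -/
def Tfam (D : Set α) (c : α) {n m : ℕ} (R : Fin n → α → α → Prop)
    (S : Fin m → α → α → Prop) (v : Fin n × Fin m × Bool) : α → α → Prop :=
  embRel D c (R v.1) (S2fam S v.2.1 v.2.2)

lemma Tfam_apply (D : Set α) (c : α) {n m : ℕ} (R : Fin n → α → α → Prop)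
    (S : Fin m → α → α → Prop) (i : Fin n) (j : Fin m) (b : Bool) :
    Tfam D c R S (i, j, b) = embRel D c (R i) (S2fam S j b) := rfl

lemma embRel_linOn {C D : Set α} {c : α} (hc : c ∈ C) (hdisj : Disjoint C D)
    {r s : α → α → Prop} (hr : IsLinOn C r) (hs : IsLinOn D s) :
    IsLinOn ((C \ {c}) ∪ D) (embRel D c r s) := by
  have hpC : ∀ x ∈ (C \ {c}) ∪ D, embProj D c x ∈ C := by
    intro x hx
    by_cases hxD : x ∈ D
    · rw [embProj_mem hxD]; exact hc
    · rw [embProj_not_mem hxD]; exact (hx.resolve_right hxD).1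
  refine ⟨?_, ?_, ?_⟩
  · intro a ha h
    by_cases haD : a ∈ D
    · exact hs.1 a haD ((embRel_DD haD haD).mp h)
    · exact hr.1 _ (hpC a ha) ((embRel_nDD (Or.inl haD)).mp h)
  · intro a ha b hb x hx h1 h2
    by_cases haD : a ∈ D <;> by_cases hbD : b ∈ D <;> by_cases hxD : x ∈ D
    · exact (embRel_DD haD hxD).mpr (hs.2.1 a haD b hbD x hxD
        ((embRel_DD haD hbD).mp h1) ((embRel_DD hbD hxD).mp h2))
    · refine (embRel_nDD (Or.inr hxD)).mpr ?_
      rw [embProj_mem haD]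
      have h2' := (embRel_nDD (Or.inr hxD)).mp h2
      rwa [embProj_mem hbD] at h2'
    · exfalso
      have h1' := (embRel_nDD (Or.inr hbD)).mp h1
      have h2' := (embRel_nDD (Or.inl hbD)).mp h2
      rw [embProj_mem haD] at h1'
      rw [embProj_mem hxD] at h2'
      exact hr.1 c hc (hr.2.1 c hc _ (hpC b hb) c hc h1' h2')
    · refine (embRel_nDD (Or.inr hxD)).mpr ?_
      have h1' := (embRel_nDD (Or.inr hbD)).mp h1
      have h2' := (embRel_nDD (Or.inl hbD)).mp h2
      exact hr.2.1 _ (hpC a ha) _ (hpC b hb) _ (hpC x hx) h1' h2'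
    · refine (embRel_nDD (Or.inl haD)).mpr ?_
      rw [embProj_mem hxD]
      have h1' := (embRel_nDD (Or.inl haD)).mp h1
      rwa [embProj_mem hbD] at h1'
    · refine (embRel_nDD (Or.inl haD)).mpr ?_
      have h1' := (embRel_nDD (Or.inl haD)).mp h1
      have h2' := (embRel_nDD (Or.inr hxD)).mp h2
      exact hr.2.1 _ (hpC a ha) _ (hpC b hb) _ (hpC x hx) h1' h2'
    · refine (embRel_nDD (Or.inl haD)).mpr ?_
      have h1' := (embRel_nDD (Or.inl haD)).mp h1
      have h2' := (embRel_nDD (Or.inl hbD)).mp h2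
      exact hr.2.1 _ (hpC a ha) _ (hpC b hb) _ (hpC x hx) h1' h2'
    · refine (embRel_nDD (Or.inl haD)).mpr ?_
      have h1' := (embRel_nDD (Or.inl haD)).mp h1
      have h2' := (embRel_nDD (Or.inl hbD)).mp h2
      exact hr.2.1 _ (hpC a ha) _ (hpC b hb) _ (hpC x hx) h1' h2'
  · intro a ha b hb hne
    by_cases haD : a ∈ D <;> by_cases hbD : b ∈ D
    · rcases hs.2.2 a haD b hbD hne with h | h
      · exact Or.inl ((embRel_DD haD hbD).mpr h)
      · exact Or.inr ((embRel_DD hbD haD).mpr h)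
    · have hne' : embProj D c a ≠ embProj D c b := by
        rw [embProj_mem haD, embProj_not_mem hbD]
        exact fun h => (hb.resolve_right hbD).2 h.symm
      rcases hr.2.2 _ (hpC a ha) _ (hpC b hb) hne' with h | h
      · exact Or.inl ((embRel_nDD (Or.inr hbD)).mpr h)
      · exact Or.inr ((embRel_nDD (Or.inl hbD)).mpr h)
    · have hne' : embProj D c a ≠ embProj D c b := by
        rw [embProj_not_mem haD, embProj_mem hbD]
        exact fun h => (ha.resolve_right haD).2 h
      rcases hr.2.2 _ (hpC a ha) _ (hpC b hb) hne' with h | h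
      · exact Or.inl ((embRel_nDD (Or.inl haD)).mpr h)
      · exact Or.inr ((embRel_nDD (Or.inr haD)).mpr h)
    · have hne' : embProj D c a ≠ embProj D c b := by
        rw [embProj_not_mem haD, embProj_not_mem hbD]; exact hne
      rcases hr.2.2 _ (hpC a ha) _ (hpC b hb) hne' with h | h
      · exact Or.inl ((embRel_nDD (Or.inl haD)).mpr h)
      · exact Or.inr ((embRel_nDD (Or.inl hbD)).mpr h)

theorem embedFamily_clone_structure (C D : Set α) (hC : C.Finite) (hD : D.Finite)
    (hDne : D.Nonempty) (hdisj : Disjoint C D) (𝓒 𝓓 : Set (Set α))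
    (h𝓒 : IsCloneStructure C 𝓒) (h𝓓 : IsCloneStructure D 𝓓)
    (c : α) (hc : c ∈ C) :
    IsCloneStructure ((C \ {c}) ∪ D) (embedFamily 𝓒 c D 𝓓) := by
  classical
  obtain ⟨n, R, ⟨hn, hR⟩, rfl⟩ := h𝓒
  obtain ⟨m, S, ⟨hm, hS⟩, rfl⟩ := h𝓓
  have hcD : c ∉ D := Set.disjoint_left.mp hdisj hc
  have hcC' : c ∉ (C \ {c}) ∪ D := by
    rintro (⟨_, h⟩ | h)
    · exact h rfl
    · exact hcD h
  have hmemC' : ∀ x ∈ (C \ {c}) ∪ D, x ∉ D → x ∈ C \ {c} :=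
    fun x hx hxD => hx.resolve_right hxD
  have hS2lin : ∀ (j : Fin m) (b : Bool), IsLinOn D (S2fam S j b) := by
    intro j b
    cases b
    · rw [S2fam_false]; exact hS j
    · rw [S2fam_true]; exact linOn_rev (hS j)
  have hTlin : ∀ v, IsLinOn ((C \ {c}) ∪ D) (Tfam D c R S v) :=
    fun v => embRel_linOn hc hdisj (hR v.1) (hS2lin v.2.1 v.2.2)
  let e : (Fin n × (Fin m × Bool)) ≃ Fin (n * (m * 2)) :=
    (Equiv.prodCongr (Equiv.refl (Fin n))
      ((Equiv.prodCongr (Equiv.refl (Fin m)) finTwoEquiv.symm).trans finProdFinEquiv)).trans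
      finProdFinEquiv
  refine ⟨n * (m * 2), fun k => Tfam D c R S (e.symm k),
    ⟨Nat.mul_pos hn (Nat.mul_pos hm (by norm_num)), fun k => hTlin _⟩, ?_⟩
  have hmem : ∀ X : Set α,
      X ∈ cloneSets ((C \ {c}) ∪ D) (fun k => Tfam D c R S (e.symm k)) ↔
        (X.Nonempty ∧ X ⊆ (C \ {c}) ∪ D ∧
          ∀ x ∈ X, ∀ x' ∈ X, ∀ a ∈ ((C \ {c}) ∪ D) \ X, ∀ v,
            (Tfam D c R S v x a ↔ Tfam D c R S v x' a)) := by
    intro X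
    simp only [cloneSets, IsCloneSet, Set.mem_setOf_eq]
    refine and_congr_right fun _ => and_congr_right fun _ =>
      ⟨fun h x hx x' hx' a ha v => ?_,
       fun h x hx x' hx' a ha k => h x hx x' hx' a ha (e.symm k)⟩
    simpa using h x hx x' hx' a ha (e v)
  ext X
  rw [hmem]
  simp only [embedFamily, Set.mem_union, Set.mem_setOf_eq]
  constructor
  · rintro (h𝓓X | ⟨Z, hZ, ⟨hcZ, rfl⟩ | ⟨hcZ, rfl⟩⟩)
    · -- a set of 𝓓
      obtain ⟨hne, hsubD, hclD⟩ := h𝓓X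
      refine ⟨hne, hsubD.trans Set.subset_union_right, ?_⟩
      intro x hx x' hx' a ha v
      obtain ⟨i, j, b⟩ := v
      obtain ⟨haC', haX⟩ := ha
      rw [Tfam_apply]
      by_cases haD : a ∈ D
      · rw [embRel_DD (hsubD hx) haD, embRel_DD (hsubD hx') haD]
        cases b
        · rw [S2fam_false]
          exact hclD x hx x' hx' a ⟨haD, haX⟩ j
        · show S j a x ↔ S j a x'
          have hax : a ≠ x := by rintro rfl; exact haX hx
          have hax' : a ≠ x' := by rintro rfl; exact haX hx'
          rw [linOn_not_iff (hS j) haD (hsubD hx) hax,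
            linOn_not_iff (hS j) haD (hsubD hx') hax']
          exact not_congr (hclD x hx x' hx' a ⟨haD, haX⟩ j)
      · rw [embRel_nDD (Or.inr haD), embRel_nDD (Or.inr haD),
          embProj_mem (hsubD hx), embProj_mem (hsubD hx')]
    · -- embedded set, `c ∈ Z`, `X = (Z \ {c}) ∪ D`
      obtain ⟨hne, hsubC, hcl⟩ := hZ
      obtain ⟨d₀, hd₀⟩ := hDne
      refine ⟨⟨d₀, Or.inr hd₀⟩,
        Set.union_subset_union (Set.diff_subset_diff_left hsubC) subset_rfl, ?_⟩
      intro x hx x' hx' a ha v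
      obtain ⟨i, j, b⟩ := v
      obtain ⟨haC', haX⟩ := ha
      have haD : a ∉ D := fun h => haX (Or.inr h)
      have haC := hmemC' a haC' haD
      have hpx : embProj D c x ∈ Z := by
        by_cases hxD : x ∈ D
        · rw [embProj_mem hxD]; exact hcZ
        · rw [embProj_not_mem hxD]; exact (hx.resolve_right hxD).1
      have hpx' : embProj D c x' ∈ Z := by
        by_cases hxD : x' ∈ D
        · rw [embProj_mem hxD]; exact hcZ
        · rw [embProj_not_mem hxD]; exact (hx'.resolve_right hxD).1
      have haZ : a ∉ Z := fun h => haX (Or.inl ⟨h, haC.2⟩)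
      rw [Tfam_apply]
      rw [embRel_nDD (Or.inr haD), embRel_nDD (Or.inr haD), embProj_not_mem haD]
      exact hcl _ hpx _ hpx' a ⟨haC.1, haZ⟩ i
    · -- unembedded set, `c ∉ Z`, `X = Z`
      obtain ⟨hne, hsubC, hcl⟩ := hZ
      have hsub' : X ⊆ C \ {c} := fun x hx => ⟨hsubC hx, fun h => hcZ (h ▸ hx)⟩
      refine ⟨hne, hsub'.trans Set.subset_union_left, ?_⟩
      intro x hx x' hx' a ha v
      obtain ⟨i, j, b⟩ := v
      obtain ⟨haC', haX⟩ := ha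
      have hxD : x ∉ D := Set.disjoint_left.mp hdisj (hsubC hx)
      have hx'D : x' ∉ D := Set.disjoint_left.mp hdisj (hsubC hx')
      rw [Tfam_apply]
      rw [embRel_nDD (Or.inl hxD), embRel_nDD (Or.inl hx'D),
        embProj_not_mem hxD, embProj_not_mem hx'D]
      by_cases haD : a ∈ D
      · rw [embProj_mem haD]
        exact hcl x hx x' hx' c ⟨hc, hcZ⟩ i
      · rw [embProj_not_mem haD]
        have haC := hmemC' a haC' haD
        exact hcl x hx x' hx' a ⟨haC.1, haX⟩ i
  · rintro ⟨hne, hsub, hcl⟩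
    by_cases hXD : X ⊆ D
    · left
      refine ⟨hne, hXD, ?_⟩
      intro x hx x' hx' a ha j
      have h := hcl x hx x' hx' a ⟨Or.inr ha.1, ha.2⟩ (⟨0, hn⟩, j, false)
      rw [Tfam_apply, embRel_DD (hXD hx) ha.1, embRel_DD (hXD hx') ha.1,
        S2fam_false] at h
      exact h
    · obtain ⟨x₀, hx₀X, hx₀D⟩ := Set.not_subset.mp hXD
      have hcX : c ∉ X := fun h => hcC' (hsub h)
      by_cases hint : (X ∩ D).Nonempty
      · -- X meets D and is not contained in D: then D ⊆ X and X is an embedded set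
        obtain ⟨d', hd'X, hd'D⟩ := hint
        have hDX : D ⊆ X := by
          intro d hd
          by_contra hdX
          have hda : d ∈ ((C \ {c}) ∪ D) \ X := ⟨Or.inr hd, hdX⟩
          have h0 := hcl x₀ hx₀X d' hd'X d hda (⟨0, hn⟩, ⟨0, hm⟩, false)
          have h1 := hcl x₀ hx₀X d' hd'X d hda (⟨0, hn⟩, ⟨0, hm⟩, true)
          rw [Tfam_apply, embRel_nDD (Or.inl hx₀D), embRel_DD hd'D hd,
            embProj_not_mem hx₀D, embProj_mem hd, S2fam_false] at h0
          rw [Tfam_apply, embRel_nDD (Or.inl hx₀D), embRel_DD hd'D hd,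
            embProj_not_mem hx₀D, embProj_mem hd] at h1
          have h1' : R ⟨0, hn⟩ x₀ c ↔ S ⟨0, hm⟩ d d' := h1
          have hdd' : d' ≠ d := fun h => hdX (h ▸ hd'X)
          have hiff : S ⟨0, hm⟩ d' d ↔ S ⟨0, hm⟩ d d' :=
            ⟨fun h => h1'.mp (h0.mpr h), fun h => h0.mp (h1'.mpr h)⟩
          rcases (hS ⟨0, hm⟩).2.2 d' hd'D d hd hdd' with h | h
          · exact linOn_asym (hS ⟨0, hm⟩) hd'D hd h (hiff.mp h)
          · exact linOn_asym (hS ⟨0, hm⟩) hd hd'D h (hiff.mpr h)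
        right
        refine ⟨(X \ D) ∪ {c}, ?_, Or.inl ⟨Set.mem_union_right _ rfl, ?_⟩⟩
        · refine ⟨⟨c, Set.mem_union_right _ rfl⟩, ?_, ?_⟩
          · rintro z (⟨hzX, hzD⟩ | hz)
            · exact (hmemC' z (hsub hzX) hzD).1
            · exact hz ▸ hc
          · intro z hz z' hz' a ha i
            obtain ⟨d₀, hd₀⟩ := hDne
            have hane : a ≠ c := fun h => ha.2 (Set.mem_union_right _ (by exact h))
            have haD : a ∉ D := Set.disjoint_left.mp hdisj ha.1
            have haX : a ∉ X := fun h => ha.2 (Set.mem_union_left _ ⟨h, haD⟩)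
            have haC' : a ∈ ((C \ {c}) ∪ D) \ X := ⟨Or.inl ⟨ha.1, hane⟩, haX⟩
            have key : ∀ w ∈ (X \ D) ∪ {c}, ∃ u ∈ X,
                (Tfam D c R S (i, ⟨0, hm⟩, false) u a ↔ R i w a) := by
              rintro w (⟨hwX, hwD⟩ | hw)
              · refine ⟨w, hwX, ?_⟩
                rw [Tfam_apply, embRel_nDD (Or.inl hwD), embProj_not_mem hwD,
                  embProj_not_mem haD]
              · refine ⟨d₀, hDX hd₀, ?_⟩
                rw [Tfam_apply, embRel_nDD (Or.inr haD), embProj_mem hd₀,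
                  embProj_not_mem haD, Set.eq_of_mem_singleton hw]
            obtain ⟨u, huX, hu⟩ := key z hz
            obtain ⟨u', hu'X, hu'⟩ := key z' hz'
            rw [← hu, ← hu']
            exact hcl u huX u' hu'X a haC' (i, ⟨0, hm⟩, false)
        · ext y
          simp only [Set.mem_union, Set.mem_diff, Set.mem_singleton_iff]
          constructor
          · intro hy
            by_cases hyD : y ∈ D
            · exact Or.inr hyD
            · exact Or.inl ⟨Or.inl ⟨hy, hyD⟩, fun h => hcX (h ▸ hy)⟩
          · rintro (⟨⟨hyX, _⟩ | hyc, hyne⟩ | hyD)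
            · exact hyX
            · exact absurd hyc hyne
            · exact hDX hyD
      · -- X misses D: it is a clone set of R not containing c
        right
        have hXC : X ⊆ C \ {c} := fun x hx => hmemC' x (hsub hx) (fun hD' => hint ⟨x, hx, hD'⟩)
        refine ⟨X, ⟨hne, fun x hx => (hXC hx).1, ?_⟩, Or.inr ⟨hcX, rfl⟩⟩
        intro x hx x' hx' a ha i
        obtain ⟨d₀, hd₀⟩ := hDne
        have hxD : x ∉ D := fun hD' => hint ⟨x, hx, hD'⟩
        have hx'D : x' ∉ D := fun hD' => hint ⟨x', hx', hD'⟩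
        by_cases hac : a = c
        · subst hac
          have hd₀X : d₀ ∉ X := fun h => hint ⟨d₀, h, hd₀⟩
          have h := hcl x hx x' hx' d₀ ⟨Or.inr hd₀, hd₀X⟩ (i, ⟨0, hm⟩, false)
          rw [Tfam_apply, embRel_nDD (Or.inl hxD), embRel_nDD (Or.inl hx'D),
            embProj_not_mem hxD, embProj_not_mem hx'D, embProj_mem hd₀] at h
          exact h
        · have haD : a ∉ D := Set.disjoint_left.mp hdisj ha.1
          have h := hcl x hx x' hx' a ⟨Or.inl ⟨ha.1, hac⟩, ha.2⟩ (i, ⟨0, hm⟩, false)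
          rw [Tfam_apply, embRel_nDD (Or.inl hxD), embRel_nDD (Or.inl hx'D),
            embProj_not_mem hxD, embProj_not_mem hx'D, embProj_not_mem haD] at h
          exact h
end
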